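/- arXiv:2010.00930 — 3 statements merged into one kernel-verified Lean document; each statement's English description precedes it below -/
import Mathlib

section
/- Let T ∈ T^(m)(n) and let X = (v_1, …, v_k) be an S-connected cadet sequence of T with maximal S-cadet sequences X_1, …, X_{k'} listed in increasing order of the index of their last node. If X has nonzero contribution r_S(X) ≠ 0 and k' > 1, then |X_1 \ X_2| = 1 and |X_{k'} \ X_{k'−1}| = 1. -/
open scoped Classical

/-- The derived sets `S⁻ᵢⱼ` of nonnegative integers:
for `i < j`, `S⁻ᵢⱼ = {s ≥ 0 : -s ∈ Sᵢⱼ}`, and `S⁻ⱼᵢ = {0} ∪ {s > 0 : s ∈ Sᵢⱼ}`. -/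
def Sminus {n : ℕ} (S : Fin n → Fin n → Finset ℤ) (i j : Fin n) : Set ℕ :=
  if i < j then {s : ℕ | -(s : ℤ) ∈ S i j}
  else {0} ∪ {s : ℕ | 0 < s ∧ (s : ℤ) ∈ S j i}

/-- `m`: the maximal absolute value of an element of some `S i j` (`i < j`). -/
def mOf {n : ℕ} (S : Fin n → Fin n → Finset ℤ) : ℕ :=
  Finset.univ.sup fun p : Fin n × Fin n =>
    if p.1 < p.2 then (S p.1 p.2).sup (fun s => s.natAbs) else 0

/-- A rooted labeled plane tree with `n` nodes (labeled by `Fin n`, index `i` representing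
the label `i+1`, so the node `1` is `(0 : Fin n)`), each node having exactly `m+1`
linearly ordered children; children that are not nodes are unlabeled leaves and carry no
further data. `parent v` is the parent node of the node `v` (with the convention
`parent root = root`), and `pos v` is the position of `v` among the `m+1` children of its
parent, so `(pos v : ℕ)` is the number `lsib v` of left siblings of `v`. -/
structure PlaneTree (n m : ℕ) where
  root : Fin n
  parent : Fin n → Fin n
  pos : Fin n → Fin (m + 1)
  parent_root : parent root = root
  reaches_root : ∀ v : Fin n, ∃ k : ℕ, parent^[k] v = root
  pos_inj : ∀ v w : Fin n, v ≠ root → w ≠ root → parent v = parent w → pos v = pos w → v = w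

namespace PlaneTree

variable {n m : ℕ}

/-- `v` is a child of `u` (among the nodes). -/
def IsChild (T : PlaneTree n m) (v u : Fin n) : Prop :=
  v ≠ T.root ∧ T.parent v = u

/-- `v` is the cadet of `u`: the rightmost child of `u` that is a node. -/
def IsCadet (T : PlaneTree n m) (u v : Fin n) : Prop :=
  T.IsChild v u ∧ ∀ w : Fin n, T.IsChild w u → T.pos w ≤ T.pos v

/-- The number of left siblings of `v`. -/
def lsib (T : PlaneTree n m) (v : Fin n) : ℕ := (T.pos v : ℕ)

end PlaneTree

/-- `(v a, v (a+1), …, v b)` is a cadet sequence of `T` (1-indexed, `1 ≤ a ≤ b`). -/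
def IsCadetWindow {n m : ℕ} (T : PlaneTree n m) (v : ℕ → Fin n) (a b : ℕ) : Prop :=
  1 ≤ a ∧ a ≤ b ∧ ∀ p : ℕ, a < p → p ≤ b → T.IsCadet (v (p - 1)) (v p)

/-- `v` is injective on the indices `a, …, b`. -/
def WindowInj {n : ℕ} (v : ℕ → Fin n) (a b : ℕ) : Prop :=
  ∀ p q : ℕ, a ≤ p → p ≤ b → a ≤ q → q ≤ b → v p = v q → p = q

/-- `(v a, …, v b)` is an `S`-cadet sequence of `T`. -/
def IsSCadetWindow {n m : ℕ} (S : Fin n → Fin n → Finset ℤ) (T : PlaneTree n m)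
    (v : ℕ → Fin n) (a b : ℕ) : Prop :=
  IsCadetWindow T v a b ∧
    ∀ i j : ℕ, a ≤ i → i < j → j ≤ b →
      (∑ p ∈ Finset.Icc (i + 1) j, T.lsib (v p)) ∉ Sminus S (v i) (v j)

/-- `(v 1, …, v k)` is a maximal cadet sequence of `T`: all children of `v k` are
leaves, and no node has `v 1` as its cadet. -/
def IsMaxCadetSeq {n m : ℕ} (T : PlaneTree n m) (k : ℕ) (v : ℕ → Fin n) : Prop :=
  IsCadetWindow T v 1 k ∧ (∀ w : Fin n, ¬ T.IsChild w (v k)) ∧ ∀ u : Fin n, ¬ T.IsCadet u (v 1)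

/-- `(v a, …, v b)` is a maximal `S`-cadet sequence inside the ambient cadet sequence
`(v 1, …, v k)`. -/
def IsMaxSCadetWindow {n m : ℕ} (S : Fin n → Fin n → Finset ℤ) (T : PlaneTree n m)
    (k : ℕ) (v : ℕ → Fin n) (a b : ℕ) : Prop :=
  b ≤ k ∧ IsSCadetWindow S T v a b ∧
    (a = 1 ∨ ¬ IsSCadetWindow S T v (a - 1) b) ∧
    (b = k ∨ ¬ IsSCadetWindow S T v a (b + 1))

/-- `Y` is (the set of nodes of) a maximal `S`-cadet sequence of `T`. -/
def IsMaxSCadetSet {n m : ℕ} (S : Fin n → Fin n → Finset ℤ) (T : PlaneTree n m)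
    (Y : Finset (Fin n)) : Prop :=
  ∃ (k : ℕ) (v : ℕ → Fin n) (a b : ℕ), IsMaxCadetSeq T k v ∧ WindowInj v 1 k ∧
    IsMaxSCadetWindow S T k v a b ∧ Y = (Finset.Icc a b).image v

/-- `Y` is (the set of nodes of) a nonempty cadet sequence of `T`. -/
def IsCadetSeqSet {n m : ℕ} (T : PlaneTree n m) (Y : Finset (Fin n)) : Prop :=
  ∃ (k : ℕ) (v : ℕ → Fin n), IsCadetWindow T v 1 k ∧ WindowInj v 1 k ∧
    Y = (Finset.Icc 1 k).image v

/-- `X` is (the set of nodes of) an `S`-connected cadet sequence of `T`: it is a cadet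
sequence, every maximal `S`-cadet sequence is disjoint from it or contained in it, and no
cadet sequence with this property is properly contained in it. -/
def SConnected {n m : ℕ} (S : Fin n → Fin n → Finset ℤ) (T : PlaneTree n m)
    (X : Finset (Fin n)) : Prop :=
  IsCadetSeqSet T X ∧
    (∀ Y, IsMaxSCadetSet S T Y → X ∩ Y = ∅ ∨ Y ⊆ X) ∧
    ∀ X', IsCadetSeqSet T X' → (∀ Y, IsMaxSCadetSet S T Y → X' ∩ Y = ∅ ∨ Y ⊆ X') →
      X' ⊆ X → X' = X

/-- `Y` is (the set of nodes of) an `S`-cadet sequence of `T` (a possible box). -/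
def IsSBox {n m : ℕ} (S : Fin n → Fin n → Finset ℤ) (T : PlaneTree n m)
    (Y : Finset (Fin n)) : Prop :=
  ∃ (k : ℕ) (v : ℕ → Fin n), IsSCadetWindow S T v 1 k ∧ WindowInj v 1 k ∧
    Y = (Finset.Icc 1 k).image v

/-- `B` is an `S`-boxing of the set of nodes `X`: a partition of `X` into
`S`-cadet sequences. -/
def IsSBoxingOf {n m : ℕ} (S : Fin n → Fin n → Finset ℤ) (T : PlaneTree n m)
    (X : Finset (Fin n)) (B : Finset (Finset (Fin n))) : Prop :=
  (∀ Y ∈ B, IsSBox S T Y ∧ Y ⊆ X) ∧ ∀ u ∈ X, ∃! Y, Y ∈ B ∧ u ∈ Y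

/-- The contribution `r_S(X)` of a cadet sequence with (injective) node set `X`
(whose length is `X.card`): `∑_{B ∈ U_S(X)} (-1)^(|X| - |B|)`. -/
noncomputable def contrib {n m : ℕ} (S : Fin n → Fin n → Finset ℤ) (T : PlaneTree n m)
    (X : Finset (Fin n)) : ℤ :=
  ∑ B : Finset (Finset (Fin n)),
    if IsSBoxingOf S T X B then (-1 : ℤ) ^ (X.card - B.card) else 0

/-- The contribution `r_S(T) = ∑_{B ∈ U_S(T)} (-1)^(n - |B|)` of the tree `T`. -/
noncomputable def treeContrib {n m : ℕ} (S : Fin n → Fin n → Finset ℤ)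
    (T : PlaneTree n m) : ℤ :=
  contrib S T Finset.univ

/-- The tuple `S` is transitive. -/
def TransitiveS {n : ℕ} (S : Fin n → Fin n → Finset ℤ) : Prop :=
  ∀ i j k : Fin n, i ≠ j → j ≠ k → i ≠ k →
    ∀ s t : ℕ, s ∉ Sminus S i j → t ∉ Sminus S j k → s + t ∉ Sminus S i k

/-- The arrangement `A_S` is almost transitive (`(i : ℕ) = 0` encodes "`i` is the node `1`"). -/
def AlmostTransitive {n : ℕ} (S : Fin n → Fin n → Finset ℤ) : Prop :=
  ∀ i j k : Fin n, i ≠ j → j ≠ k → i ≠ k → (i : ℕ) ≠ 0 → (k : ℕ) ≠ 0 →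
    ∀ s t : ℕ, s ∉ Sminus S i j → t ∉ Sminus S j k → s + t ∉ Sminus S i k

/-- `A_S` is an Ish-type arrangement: `0 ∈ Sᵢⱼ` for all `i < j`, and `Sᵢⱼ = {0}`
whenever `1 < i < j`. -/
def IshType {n : ℕ} (S : Fin n → Fin n → Finset ℤ) : Prop :=
  (∀ i j : Fin n, i < j → (0 : ℤ) ∈ S i j) ∧
    ∀ i j : Fin n, 0 < (i : ℕ) → i < j → S i j = {0}

/-- `A_S` is a nested Ish arrangement. -/
def NestedIsh {n : ℕ} (S : Fin n → Fin n → Finset ℤ) : Prop :=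
  IshType S ∧ ∀ i j k : Fin n, (i : ℕ) = 0 → 0 < (j : ℕ) → j < k → S i j ⊆ S i k

/-- The lower inefficiency `E_l(T)`: the number of lower inefficient nodes of `T`,
i.e. nodes `w` that are left siblings of the node `1` with `lsib w ∉ S⁻_{w,1}`. -/
noncomputable def Elow {n m : ℕ} [NeZero n] (S : Fin n → Fin n → Finset ℤ)
    (T : PlaneTree n m) : ℕ :=
  (Finset.univ.filter fun w : Fin n =>
    w ≠ T.root ∧ (0 : Fin n) ≠ T.root ∧ T.parent w = T.parent 0 ∧ T.pos w < T.pos 0 ∧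
      T.lsib w ∉ Sminus S w 0).card

/-- The upper inefficiency `E_u(T)`: the number of upper inefficient nodes of `T`,
i.e. nodes `w` with parent the node `1` that are not the cadet of `1`, with
`lsib w ∉ S⁻_{1,w}`. -/
noncomputable def Eup {n m : ℕ} [NeZero n] (S : Fin n → Fin n → Finset ℤ)
    (T : PlaneTree n m) : ℕ :=
  (Finset.univ.filter fun w : Fin n =>
    T.IsChild w 0 ∧ ¬ T.IsCadet 0 w ∧ T.lsib w ∉ Sminus S 0 w).card

/-- The class `S(e_l, ℓ_l, e_u, ℓ_u)` of trees in `T^(m)(n)` with nonzero contribution,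
lower/upper inefficiencies `e_l, e_u` and lower/upper 1-lengths `ℓ_l, ℓ_u` (the latter
expressed via the maximal `S`-cadet sequence `{v_{j-ℓ_l}, …, v_j, …, v_{j+ℓ_u}}`
around the node `1 = v j` inside its maximal cadet sequence `(v 1, …, v t)`). -/
def ClassS {n : ℕ} [NeZero n] (S : Fin n → Fin n → Finset ℤ) (el ll eu lu : ℕ) :
    Set (PlaneTree n (mOf S)) :=
  {T | treeContrib S T ≠ 0 ∧ Elow S T = el ∧ Eup S T = eu ∧
    ∃ (t : ℕ) (v : ℕ → Fin n) (j : ℕ), IsMaxCadetSeq T t v ∧ WindowInj v 1 t ∧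
      1 ≤ j ∧ j ≤ t ∧ v j = 0 ∧ ll < j ∧ j + lu ≤ t ∧
      IsMaxSCadetWindow S T t v (j - ll) (j + lu)}

/-- The complement in `ℝ^n` of the union of the hyperplanes `xᵢ - xⱼ = s`
(`i < j`, `s ∈ S i j`) of the arrangement `A_S`. -/
def complementSet {n : ℕ} (S : Fin n → Fin n → Finset ℤ) : Set (Fin n → ℝ) :=
  {x | ∀ i j : Fin n, i < j → ∀ s ∈ S i j, x i - x j ≠ (s : ℝ)}

/-- The number of regions `r_S` of the arrangement `A_S`: the number of connected
components of the complement of its hyperplanes. -/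
noncomputable def numRegions {n : ℕ} (S : Fin n → Fin n → Finset ℤ) : ℕ :=
  Nat.card (ConnectedComponents ↥(complementSet S))

/-- A rooted labeled plane tree with `n` nodes and arbitrary numbers of children:
`nchild u` is the total number of (linearly ordered) children of the node `u`, and
`pos v` the position of the node `v` among the children of its parent (so
`lsib v = pos v` and `rsib v = nchild (parent v) - 1 - pos v`). Children not occupied
by nodes are unlabeled leaves. -/
structure LPTree (n : ℕ) where
  root : Fin n
  parent : Fin n → Fin n
  pos : Fin n → ℕ
  nchild : Fin n → ℕ
  parent_root : parent root = root
  reaches_root : ∀ v : Fin n, ∃ k : ℕ, parent^[k] v = root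
  pos_lt : ∀ v : Fin n, v ≠ root → pos v < nchild (parent v)
  pos_inj : ∀ v w : Fin n, v ≠ root → w ≠ root → parent v = parent w → pos v = pos w → v = w

/-- Membership in the set `𝔗(S)`: the root is the node `1`, the node `1` has `2m+2`
children, every other node has exactly one child, and every node `k ≠ 1` satisfies
`lsib k ∈ S⁻₁ₖ` or `rsib k ∈ S⁻ₖ₁`. -/
def IsFrakT {n : ℕ} [NeZero n] (S : Fin n → Fin n → Finset ℤ) (T : LPTree n) : Prop :=
  T.root = 0 ∧ T.nchild 0 = 2 * mOf S + 2 ∧ (∀ v : Fin n, v ≠ 0 → T.nchild v = 1) ∧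
    ∀ v : Fin n, v ≠ 0 →
      (T.pos v ∈ Sminus S 0 v ∨ (T.nchild (T.parent v) - 1 - T.pos v) ∈ Sminus S v 0)

/-- For an `S`-connected cadet sequence `(v 1, …, v k)` whose maximal `S`-cadet
sequences are the windows `[a r, b r]` (`1 ≤ r ≤ k'`, in increasing order of last index),
`LastIdx a b k' j` is the index of the largest-indexed node of `X_j \ X_{j+1}`
(with `X_{k'+1} = {0}` containing no node of the sequence). -/
def LastIdx (a b : ℕ → ℕ) (k' j : ℕ) : ℕ :=
  ((Finset.Icc (a j) (b j)) \
    (if j = k' then (∅ : Finset ℕ) else Finset.Icc (a (j + 1)) (b (j + 1)))).sup id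

/-- `X_i` reaches `X_j`: the parent of the largest-indexed node of `X_j \ X_{j+1}`
belongs to `X_i`, with the conventions `X_0 = {0}`, `parent (v 1) = 0`
(the index `0` plays the role of `X_0`). -/
def Reaches (a b : ℕ → ℕ) (k' i j : ℕ) : Prop :=
  i < j ∧ j ≤ k' ∧
    ((i = 0 ∧ LastIdx a b k' j = 1) ∨
      (1 ≤ i ∧ 2 ≤ LastIdx a b k' j ∧ a i ≤ LastIdx a b k' j - 1 ∧
        LastIdx a b k' j - 1 ≤ b i))

/-- A successful run of the algorithm: `idx 0 = 0`; at each step, the next term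
`idx (j+1)` is the smallest-indexed maximal `S`-cadet sequence reached by `X_{idx j}`
but not reached by any `X_{idx l}` with `l < j`; the run terminates at `k'`
after `t` steps. -/
def AlgRun (a b : ℕ → ℕ) (k' t : ℕ) (idx : ℕ → ℕ) : Prop :=
  idx 0 = 0 ∧ idx t = k' ∧ (∀ j, j < t → idx j ≠ k') ∧
    ∀ j, j < t →
      Reaches a b k' (idx j) (idx (j + 1)) ∧
        (∀ l, l < j → ¬ Reaches a b k' (idx l) (idx (j + 1))) ∧
        ∀ r, r < idx (j + 1) → Reaches a b k' (idx j) r → ∃ l, l < j ∧ Reaches a b k' (idx l) r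

/-- Condition (2) of Proposition 4.5 (with lower 1-length `i` and upper 1-length `k`),
for the maximal cadet sequence `(v 1, …, v t)` containing the node `1 = v j`. -/
def Cond9 {n m : ℕ} (S : Fin n → Fin n → Finset ℤ) (T : PlaneTree n m)
    (t : ℕ) (v : ℕ → Fin n) (j i k : ℕ) : Prop :=
  i < j ∧ k ≤ t - j ∧
    (∀ s : ℕ, 1 ≤ s → s ≤ t → (s < j - i - 1 ∨ j + k + 1 < s) →
      IsMaxSCadetWindow S T t v s s) ∧
    IsMaxSCadetWindow S T t v (j - i) (j + k) ∧
    (j - i ≠ 1 → IsMaxSCadetWindow S T t v (j - i - 1) (j - 1)) ∧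
    (j - i = 1 → i = 0) ∧
    (j + k ≠ t → IsMaxSCadetWindow S T t v (j + 1) (j + k + 1)) ∧
    (j + k = t → k = 0) ∧
    ∀ a' b' : ℕ, IsMaxSCadetWindow S T t v a' b' →
      ((a' = b' ∧ (a' < j - i - 1 ∨ j + k + 1 < a')) ∨ (a' = j - i ∧ b' = j + k) ∨
        (j - i ≠ 1 ∧ a' = j - i - 1 ∧ b' = j - 1) ∨ (j + k ≠ t ∧ a' = j + 1 ∧ b' = j + k + 1))

-- ### auxiliary lemmas

section Aux

variable {n m : ℕ} {T : PlaneTree n m} {S : Fin n → Fin n → Finset ℤ}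

lemma cadet_unique {u x y : Fin n} (hx : T.IsCadet u x) (hy : T.IsCadet u y) : x = y :=
  T.pos_inj x y hx.1.1 hy.1.1 (hx.1.2.trans hy.1.2.symm)
    (le_antisymm (hy.2 x hx.1) (hx.2 y hy.1))

lemma no_cycle (C : Finset (Fin n)) (h : ∀ x ∈ C, x ≠ T.root ∧ T.parent x ∈ C) : C = ∅ := by
  by_contra hne
  obtain ⟨x, hx⟩ := Finset.nonempty_iff_ne_empty.2 hne
  have key : ∀ k : ℕ, T.parent^[k] x ∈ C := by
    intro k
    induction k with
    | zero => simpa using hx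
    | succ k ih =>
      rw [Function.iterate_succ_apply']
      exact (h _ ih).2
  obtain ⟨k, hk⟩ := T.reaches_root x
  exact (h _ (hk ▸ key k)).1 rfl

lemma cadet_window_inj {v : ℕ → Fin n} {a b : ℕ} (hc : IsCadetWindow T v a b) :
    WindowInj v a b := by
  intro p q hap hpb haq hqb heq
  by_contra hne
  -- wlog p < q
  wlog hpq : p < q generalizing p q
  · exact this q p haq hqb hap hpb heq.symm (Ne.symm hne) (by omega)
  -- cycle on image of [p+1, q]
  have : (Finset.Icc (p + 1) q).image v = ∅ := by
    apply no_cycle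
    intro x hx
    simp only [Finset.mem_image, Finset.mem_Icc] at hx
    obtain ⟨l, ⟨hl1, hl2⟩, rfl⟩ := hx
    have hcad : T.IsCadet (v (l - 1)) (v l) := hc.2.2 l (by omega) (by omega)
    refine ⟨hcad.1.1, ?_⟩
    rw [hcad.1.2]
    by_cases hl : l = p + 1
    · subst hl
      simp only [Nat.add_sub_cancel, heq]
      simp only [Finset.mem_image, Finset.mem_Icc]
      exact ⟨q, ⟨by omega, le_rfl⟩, rfl⟩
    · simp only [Finset.mem_image, Finset.mem_Icc]
      exact ⟨l - 1, ⟨by omega, by omega⟩, rfl⟩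
  have : v q ∈ (∅ : Finset (Fin n)) := by
    rw [← this]
    simp only [Finset.mem_image, Finset.mem_Icc]
    exact ⟨q, ⟨by omega, le_rfl⟩, rfl⟩
  simp at this

lemma isCadetWindow_mono {v : ℕ → Fin n} {a b a' b' : ℕ} (h : IsCadetWindow T v a b)
    (h1 : a ≤ a') (h2 : a' ≤ b') (h3 : b' ≤ b) : IsCadetWindow T v a' b' :=
  ⟨le_trans h.1 h1, h2, fun p hp1 hp2 => h.2.2 p (by omega) (by omega)⟩

lemma subwindow {v : ℕ → Fin n} {a b a' b' : ℕ} (h : IsSCadetWindow S T v a b)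
    (h1 : a ≤ a') (h2 : a' ≤ b') (h3 : b' ≤ b) : IsSCadetWindow S T v a' b' :=
  ⟨isCadetWindow_mono h.1 h1 h2 h3,
   fun i j hi hij hj => h.2 i j (by omega) hij (by omega)⟩

lemma sum_Icc_add (f : ℕ → ℕ) (c x y : ℕ) :
    ∑ q ∈ Finset.Icc (x + c) (y + c), f q = ∑ q ∈ Finset.Icc x y, f (q + c) := by
  rw [← Finset.image_add_right_Icc, Finset.sum_image]
  intro i _ j _ h
  simp only at h
  omega

lemma window_congr {v w : ℕ → Fin n} {a d p : ℕ} (hp : 1 ≤ p)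
    (heq : ∀ i, i ≤ d → w (p + i) = v (a + i))
    (hwin : IsSCadetWindow S T v a (a + d)) : IsSCadetWindow S T w p (p + d) := by
  constructor
  · refine ⟨hp, by omega, fun q hq1 hq2 => ?_⟩
    have h1 : w (q - 1) = v (a + (q - p - 1)) := by
      have : q - 1 = p + (q - p - 1) := by omega
      rw [this, heq _ (by omega)]
    have h2 : w q = v (a + (q - p)) := by
      have : q = p + (q - p) := by omega
      rw [this, heq _ (by omega)]
      congr 1
      omega
    rw [h1, h2]
    have := hwin.1.2.2 (a + (q - p)) (by omega) (by omega)
    have harith : a + (q - p) - 1 = a + (q - p - 1) := by omega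
    rwa [harith] at this
  · intro i j hi hij hj
    obtain ⟨s, rfl⟩ : ∃ s, i = p + s := ⟨i - p, by omega⟩
    obtain ⟨t, rfl⟩ : ∃ t, j = p + t := ⟨j - p + s - s, by omega⟩
    have hwi : w (p + s) = v (a + s) := heq s (by omega)
    have hwj : w (p + t) = v (a + t) := heq t (by omega)
    have hsum : ∑ q ∈ Finset.Icc (p + s + 1) (p + t), T.lsib (w q)
        = ∑ q ∈ Finset.Icc (a + s + 1) (a + t), T.lsib (v q) := by
      have e1 : p + s + 1 = (s + 1) + p := by omega
      have e2 : p + t = t + p := by omega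
      have e3 : a + s + 1 = (s + 1) + a := by omega
      have e4 : a + t = t + a := by omega
      rw [e1, e2, sum_Icc_add, e3, e4, sum_Icc_add]
      apply Finset.sum_congr rfl
      intro q hq
      simp only [Finset.mem_Icc] at hq
      have e5 : q + p = p + q := by omega
      have e6 : q + a = a + q := by omega
      rw [e5, e6, heq _ (by omega)]
    rw [hwi, hwj, hsum]
    exact hwin.2 _ _ (by omega) (by omega) (by omega)

lemma image_window_shift {v w : ℕ → Fin n} {a d p : ℕ}
    (heq : ∀ i, i ≤ d → w (p + i) = v (a + i)) :
    (Finset.Icc p (p + d)).image w = (Finset.Icc a (a + d)).image v := by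
  ext x
  simp only [Finset.mem_image, Finset.mem_Icc]
  constructor
  · rintro ⟨j, ⟨h1, h2⟩, rfl⟩
    refine ⟨a + (j - p), by omega, ?_⟩
    rw [← heq _ (by omega)]
    congr 1
    omega
  · rintro ⟨j, ⟨h1, h2⟩, rfl⟩
    refine ⟨p + (j - a), by omega, ?_⟩
    rw [heq _ (by omega)]
    congr 1
    omega

lemma exists_cadet_of_child {u z : Fin n} (h : T.IsChild z u) : ∃ x, T.IsCadet u x := by
  obtain ⟨x, hx, hmax⟩ := Finset.exists_max_image
    (Finset.univ.filter (fun w => T.IsChild w u)) T.pos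
    ⟨z, Finset.mem_filter.2 ⟨Finset.mem_univ _, h⟩⟩
  exact ⟨x, (Finset.mem_filter.1 hx).2,
    fun w hw => hmax w (Finset.mem_filter.2 ⟨Finset.mem_univ _, hw⟩)⟩

lemma chain_embed {v w : ℕ → Fin n} {a b c d : ℕ}
    (hv : IsCadetWindow T v a b) (hw : IsCadetWindow T w c d)
    (himg : ∀ i, c ≤ i → i ≤ d → ∃ j, a ≤ j ∧ j ≤ b ∧ v j = w i) :
    ∃ p, a ≤ p ∧ p + (d - c) ≤ b ∧ ∀ i, i ≤ d - c → w (c + i) = v (p + i) := by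
  obtain ⟨p, hp1, hp2, hp3⟩ := himg c le_rfl hw.2.1
  have claim : ∀ i, i ≤ d - c → p + i ≤ b ∧ w (c + i) = v (p + i) := by
    intro i hi
    induction i with
    | zero => exact ⟨by omega, by simpa using hp3.symm⟩
    | succ i ih =>
      obtain ⟨ihb, ihe⟩ := ih (by omega)
      have hcad : T.IsCadet (w (c + i)) (w (c + i + 1)) := by
        have := hw.2.2 (c + i + 1) (by omega) (by omega)
        simpa using this
      obtain ⟨j, hj1, hj2, hj3⟩ := himg (c + i + 1) (by omega) (by omega)
      have hch : T.IsChild (v j) (v (p + i)) := by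
        rw [hj3, ← ihe]
        exact hcad.1
      rcases eq_or_lt_of_le hj1 with hja | hja
      · -- j = a : cycle
        exfalso
        have hC : ((Finset.Icc a (p + i)).image v) = ∅ := by
          apply no_cycle
          intro x hx
          simp only [Finset.mem_image, Finset.mem_Icc] at hx
          obtain ⟨l, ⟨hl1, hl2⟩, rfl⟩ := hx
          rcases eq_or_lt_of_le hl1 with hla | hla
          · have hjl : l = j := by omega
            subst hjl
            refine ⟨hch.1, ?_⟩
            rw [hch.2]
            simp only [Finset.mem_image, Finset.mem_Icc]
            exact ⟨p + i, ⟨by omega, le_rfl⟩, rfl⟩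
          · have hc2 : T.IsCadet (v (l - 1)) (v l) := hv.2.2 l (by omega) (by omega)
            refine ⟨hc2.1.1, ?_⟩
            rw [hc2.1.2]
            simp only [Finset.mem_image, Finset.mem_Icc]
            exact ⟨l - 1, ⟨by omega, by omega⟩, rfl⟩
        have : v a ∈ (Finset.Icc a (p + i)).image v := by
          simp only [Finset.mem_image, Finset.mem_Icc]
          exact ⟨a, ⟨le_rfl, by omega⟩, rfl⟩
        rw [hC] at this
        simp at this
      · -- j > a
        have hc2 : T.IsCadet (v (j - 1)) (v j) := hv.2.2 j hja hj2
        have heq2 : v (j - 1) = v (p + i) := by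
          rw [← hc2.1.2, hch.2]
        have hji : j - 1 = p + i :=
          cadet_window_inj hv _ _ (by omega) (by omega) (by omega) (by omega) heq2
        refine ⟨by omega, ?_⟩
        have hj' : j = p + (i + 1) := by omega
        show w (c + i + 1) = v (p + (i + 1))
        rw [← hj', hj3]
  exact ⟨p, hp1, (claim _ le_rfl).1, fun i hi => (claim i hi).2⟩

end Aux

section Box

variable {n m : ℕ} {T : PlaneTree n m} {S : Fin n → Fin n → Finset ℤ}

lemma isSBox_image {v : ℕ → Fin n} {p q : ℕ} (hwin : IsSCadetWindow S T v p q) :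
    IsSBox S T ((Finset.Icc p q).image v) := by
  have hp1 : 1 ≤ p := hwin.1.1
  have hpq : p ≤ q := hwin.1.2.1
  set w : ℕ → Fin n := fun i => v (p + i - 1) with hw
  have heq : ∀ i, i ≤ q - p → w (1 + i) = v (p + i) := by
    intro i hi
    simp only [hw]
    congr 1
    omega
  have hq' : p + (q - p) = q := by omega
  have hwin' : IsSCadetWindow S T w 1 (1 + (q - p)) :=
    window_congr le_rfl heq (by rwa [hq'])
  refine ⟨1 + (q - p), w, hwin', cadet_window_inj hwin'.1, ?_⟩
  rw [image_window_shift heq, hq']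

lemma sbox_nonempty {Y : Finset (Fin n)} (hY : IsSBox S T Y) : Y.Nonempty := by
  obtain ⟨k₀, v₀, hwin₀, _, rfl⟩ := hY
  exact ⟨v₀ 1, Finset.mem_image.2 ⟨1, Finset.mem_Icc.2 ⟨le_rfl, hwin₀.1.2.1⟩, rfl⟩⟩

lemma sbox_to_window {v : ℕ → Fin n} {k : ℕ} (hcad : IsCadetWindow T v 1 k)
    {Y : Finset (Fin n)} (hY : IsSBox S T Y) (hsub : Y ⊆ (Finset.Icc 1 k).image v) :
    ∃ p q, 1 ≤ p ∧ p ≤ q ∧ q ≤ k ∧ IsSCadetWindow S T v p q ∧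
      Y = (Finset.Icc p q).image v := by
  obtain ⟨k₀, v₀, hwin₀, hinj₀, rfl⟩ := hY
  have hk₀ : 1 ≤ k₀ := hwin₀.1.2.1
  have himg : ∀ i, 1 ≤ i → i ≤ k₀ → ∃ j, 1 ≤ j ∧ j ≤ k ∧ v j = v₀ i := by
    intro i h1 h2
    have hmem : v₀ i ∈ (Finset.Icc 1 k).image v :=
      hsub (Finset.mem_image.2 ⟨i, Finset.mem_Icc.2 ⟨h1, h2⟩, rfl⟩)
    simp only [Finset.mem_image, Finset.mem_Icc] at hmem
    obtain ⟨j, ⟨hj1, hj2⟩, hj3⟩ := hmem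
    exact ⟨j, hj1, hj2, hj3⟩
  obtain ⟨p, hp1, hp2, hp3⟩ := chain_embed hcad hwin₀.1 himg
  have heq' : ∀ i, i ≤ k₀ - 1 → v (p + i) = v₀ (1 + i) := fun i hi => (hp3 i hi).symm
  have hk₀' : 1 + (k₀ - 1) = k₀ := by omega
  refine ⟨p, p + (k₀ - 1), hp1, by omega, by omega, ?_, ?_⟩
  · exact window_congr hp1 heq' (by rwa [hk₀'])
  · rw [image_window_shift heq', hk₀']

lemma boxing_card_le {X : Finset (Fin n)} {B : Finset (Finset (Fin n))}
    (hB : IsSBoxingOf S T X B) : B.card ≤ X.card := by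
  have hdisj : ∀ Y₁ ∈ B, ∀ Y₂ ∈ B, Y₁ ≠ Y₂ → Disjoint Y₁ Y₂ := by
    intro Y₁ h₁ Y₂ h₂ hne
    rw [Finset.disjoint_left]
    intro u hu₁ hu₂
    have huX : u ∈ X := (hB.1 Y₁ h₁).2 hu₁
    obtain ⟨Z, _, huniq⟩ := hB.2 u huX
    exact hne ((huniq _ ⟨h₁, hu₁⟩).trans (huniq _ ⟨h₂, hu₂⟩).symm)
  have hX : X = B.biUnion id := by
    apply Finset.Subset.antisymm
    · intro u hu
      obtain ⟨Z, hZ, _⟩ := hB.2 u hu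
      exact Finset.mem_biUnion.2 ⟨Z, hZ.1, hZ.2⟩
    · intro u hu
      obtain ⟨Z, hZ, huZ⟩ := Finset.mem_biUnion.1 hu
      exact (hB.1 Z hZ).2 huZ
  calc B.card = ∑ _Y ∈ B, 1 := by simp
  _ ≤ ∑ Y ∈ B, Y.card := by
      apply Finset.sum_le_sum
      intro Y hY
      exact Finset.card_pos.2 (sbox_nonempty (hB.1 Y hY).1)
  _ = X.card := by
      rw [hX]
      exact (Finset.card_biUnion hdisj).symm

end Box

noncomputable def theBlock {n : ℕ} (B : Finset (Finset (Fin n))) (u : Fin n) :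
    Finset (Fin n) :=
  if h : ∃ Y ∈ B, u ∈ Y then h.choose else ∅

lemma theBlock_spec {n : ℕ} {B : Finset (Finset (Fin n))} {u : Fin n}
    (h : ∃ Y ∈ B, u ∈ Y) : theBlock B u ∈ B ∧ u ∈ theBlock B u := by
  rw [theBlock, dif_pos h]
  exact ⟨h.choose_spec.1, h.choose_spec.2⟩

lemma theBlock_eq_of {n m : ℕ} {T : PlaneTree n m} {S : Fin n → Fin n → Finset ℤ}
    {X : Finset (Fin n)} {B : Finset (Finset (Fin n))} (hB : IsSBoxingOf S T X B)
    {u : Fin n} {Y : Finset (Fin n)} (hu : u ∈ X) (hY : Y ∈ B) (huY : u ∈ Y) :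
    theBlock B u = Y := by
  obtain ⟨Z, _, huniq⟩ := hB.2 u hu
  have h : ∃ Y ∈ B, u ∈ Y := ⟨Y, hY, huY⟩
  have h1 := theBlock_spec h
  rw [huniq _ ⟨h1.1, h1.2⟩, huniq _ ⟨hY, huY⟩]



section Chains

variable {n m : ℕ} {T : PlaneTree n m} {S : Fin n → Fin n → Finset ℤ}

lemma no_infinite_child_chain {f : ℕ → Fin n} (hc : ∀ j, T.IsChild (f j) (f (j + 1))) :
    False := by
  obtain ⟨x, y, hne, heq⟩ := Finite.exists_ne_map_eq_of_infinite f
  wlog hxy : x < y generalizing x y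
  · exact this y x (Ne.symm hne) heq.symm (by omega)
  have hC : ((Finset.Icc x (y - 1)).image f) = ∅ := by
    apply no_cycle
    intro z hz
    simp only [Finset.mem_image, Finset.mem_Icc] at hz
    obtain ⟨l, ⟨hl1, hl2⟩, rfl⟩ := hz
    refine ⟨(hc l).1, ?_⟩
    rw [(hc l).2]
    simp only [Finset.mem_image, Finset.mem_Icc]
    by_cases hly : l = y - 1
    · exact ⟨x, ⟨le_rfl, by omega⟩, by rw [heq]; congr 1; omega⟩
    · exact ⟨l + 1, ⟨by omega, by omega⟩, rfl⟩
  have : f x ∈ (Finset.Icc x (y - 1)).image f := by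
    simp only [Finset.mem_image, Finset.mem_Icc]
    exact ⟨x, ⟨le_rfl, by omega⟩, rfl⟩
  rw [hC] at this
  simp at this

lemma no_infinite_desc {f : ℕ → Fin n} (hc : ∀ j, T.IsChild (f (j + 1)) (f j)) :
    False := by
  obtain ⟨x, y, hne, heq⟩ := Finite.exists_ne_map_eq_of_infinite f
  wlog hxy : x < y generalizing x y
  · exact this y x (Ne.symm hne) heq.symm (by omega)
  have hC : ((Finset.Icc (x + 1) y).image f) = ∅ := by
    apply no_cycle
    intro z hz
    simp only [Finset.mem_image, Finset.mem_Icc] at hz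
    obtain ⟨l, ⟨hl1, hl2⟩, rfl⟩ := hz
    have hl : T.IsChild (f l) (f (l - 1)) := by
      have := hc (l - 1)
      rwa [show l - 1 + 1 = l by omega] at this
    refine ⟨hl.1, ?_⟩
    rw [hl.2]
    simp only [Finset.mem_image, Finset.mem_Icc]
    by_cases hlx : l = x + 1
    · exact ⟨y, ⟨by omega, le_rfl⟩, by rw [← heq]; congr 1; omega⟩
    · exact ⟨l - 1, ⟨by omega, by omega⟩, rfl⟩
  have : f y ∈ (Finset.Icc (x + 1) y).image f := by
    simp only [Finset.mem_image, Finset.mem_Icc]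
    exact ⟨y, ⟨by omega, le_rfl⟩, rfl⟩
  rw [hC] at this
  simp at this

lemma exists_max_ext {v : ℕ → Fin n} {k : ℕ} (hcad : IsCadetWindow T v 1 k) :
    ∃ (t : ℕ) (w : ℕ → Fin n) (o : ℕ), IsMaxCadetSeq T t w ∧ k + o ≤ t ∧
      ∀ i, 1 ≤ i → i ≤ k → w (i + o) = v i := by
  classical
  have hk : 1 ≤ k := hcad.2.1
  set step : Fin n → Fin n := fun y => if h : ∃ z, T.IsCadet y z then h.choose else y
    with hstepdef
  have hstep : ∀ y, (∃ z, T.IsCadet y z) → T.IsCadet y (step y) := by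
    intro y h
    simp only [hstepdef, dif_pos h]
    exact h.choose_spec
  set dn : ℕ → Fin n := fun j => step^[j] (v k) with hdndef
  have hdn0 : dn 0 = v k := rfl
  have hdnsucc : ∀ j, dn (j + 1) = step (dn j) := fun j =>
    Function.iterate_succ_apply' step j (v k)
  have hexd : ∃ j, ¬ ∃ z, T.IsCadet (dn j) z := by
    by_contra hall
    push_neg at hall
    exact no_infinite_desc (f := dn)
      (fun j => by rw [hdnsucc]; exact (hstep _ (hall j)).1)
  set e := Nat.find hexd with hedef
  have he : ¬ ∃ z, T.IsCadet (dn e) z := Nat.find_spec hexd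
  have hdchain : ∀ j, j < e → T.IsCadet (dn j) (dn (j + 1)) := by
    intro j hj
    rw [hdnsucc]
    exact hstep _ (not_not.mp (Nat.find_min hexd hj))
  set stepU : Fin n → Fin n := fun y => if h : ∃ z, T.IsCadet z y then h.choose else y
    with hstepUdef
  have hstepU : ∀ y, (∃ z, T.IsCadet z y) → T.IsCadet (stepU y) y := by
    intro y h
    simp only [hstepUdef, dif_pos h]
    exact h.choose_spec
  set up : ℕ → Fin n := fun j => stepU^[j] (v 1) with hupdef
  have hup0 : up 0 = v 1 := rfl
  have hupsucc : ∀ j, up (j + 1) = stepU (up j) := fun j =>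
    Function.iterate_succ_apply' stepU j (v 1)
  have hexu : ∃ j, ¬ ∃ z, T.IsCadet z (up j) := by
    by_contra hall
    push_neg at hall
    exact no_infinite_child_chain (f := up)
      (fun j => by rw [hupsucc]; exact (hstepU _ (hall j)).1)
  set e' := Nat.find hexu with he'def
  have he' : ¬ ∃ z, T.IsCadet z (up e') := Nat.find_spec hexu
  have huchain : ∀ j, j < e' → T.IsCadet (up (j + 1)) (up j) := by
    intro j hj
    rw [hupsucc]
    exact hstepU _ (not_not.mp (Nat.find_min hexu hj))
  set t := e' + k + e with htdef
  set w : ℕ → Fin n := fun i =>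
    if i ≤ e' then up (e' + 1 - i) else if i ≤ e' + k then v (i - e') else dn (i - e' - k)
    with hwdef
  have hw1 : ∀ i, i ≤ e' → w i = up (e' + 1 - i) := by
    intro i h2
    simp only [hwdef, if_pos h2]
  have hw2 : ∀ i, e' < i → i ≤ e' + k → w i = v (i - e') := by
    intro i h1 h2
    simp only [hwdef, if_neg (by omega : ¬ i ≤ e'), if_pos h2]
  have hw3 : ∀ i, e' + k < i → w i = dn (i - e' - k) := by
    intro i h1
    simp only [hwdef, if_neg (by omega : ¬ i ≤ e'), if_neg (by omega : ¬ i ≤ e' + k)]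
  have hchain : ∀ p, 1 < p → p ≤ t → T.IsCadet (w (p - 1)) (w p) := by
    intro p hp1 hp2
    by_cases c1 : p ≤ e'
    · rw [hw1 p (by omega), hw1 (p - 1) (by omega)]
      have := huchain (e' + 1 - p) (by omega)
      rwa [show e' + 1 - (p - 1) = (e' + 1 - p) + 1 by omega]
    · by_cases c2 : p = e' + 1
      · rw [hw2 p (by omega) (by omega), hw1 (p - 1) (by omega)]
        rw [show e' + 1 - (p - 1) = 1 by omega, show p - e' = 1 by omega, ← hup0]
        exact huchain 0 (by omega)
      · by_cases c3 : p ≤ e' + k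
        · rw [hw2 p (by omega) (by omega), hw2 (p - 1) (by omega) (by omega)]
          have := hcad.2.2 (p - e') (by omega) (by omega)
          rwa [show p - 1 - e' = p - e' - 1 by omega]
        · by_cases c4 : p = e' + k + 1
          · rw [hw3 p (by omega), hw2 (p - 1) (by omega) (by omega)]
            rw [show p - 1 - e' = k by omega, show p - e' - k = 1 by omega, ← hdn0]
            exact hdchain 0 (by omega)
          · rw [hw3 p (by omega), hw3 (p - 1) (by omega)]
            have := hdchain (p - e' - k - 1) (by omega)
            rw [show p - 1 - e' - k = p - e' - k - 1 by omega,
              show p - e' - k = (p - e' - k - 1) + 1 by omega]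
            exact this
  have hwt : w t = dn e := by
    by_cases he0 : e = 0
    · rw [hw2 t (by omega) (by omega), he0, hdn0]
      congr 1
      omega
    · rw [hw3 t (by omega)]
      congr 1
      omega
  have hwone : w 1 = up e' := by
    by_cases h0 : e' = 0
    · rw [hw2 1 (by omega) (by omega), h0, hup0]
    · rw [hw1 1 (by omega)]
      congr 1
  refine ⟨t, w, e', ⟨⟨le_rfl, by omega, hchain⟩, ?_, ?_⟩, by omega, ?_⟩
  · intro z hz
    rw [hwt] at hz
    exact he (exists_cadet_of_child hz)
  · intro u hu
    rw [hwone] at hu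
    exact he' ⟨u, hu⟩
  · intro i h1 h2
    rw [hw2 (i + e') (by omega) (by omega)]
    congr 1
    omega

end Chains


section Main

variable {n m : ℕ} {T : PlaneTree n m} {S : Fin n → Fin n → Finset ℤ}
variable {k : ℕ} {v : ℕ → Fin n} {k' : ℕ} {a b : ℕ → ℕ}

lemma idx_mem_iff (hinj : WindowInj v 1 k) {p q j : ℕ} (hp : 1 ≤ p) (hq : q ≤ k)
    (hj1 : 1 ≤ j) (hj2 : j ≤ k) :
    v j ∈ (Finset.Icc p q).image v ↔ p ≤ j ∧ j ≤ q := by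
  constructor
  · intro h
    obtain ⟨j', hj', e⟩ := Finset.mem_image.1 h
    rw [Finset.mem_Icc] at hj'
    have := hinj j' j (by omega) (by omega) hj1 hj2 e
    omega
  · intro h
    exact Finset.mem_image.2 ⟨j, Finset.mem_Icc.2 h, rfl⟩

lemma image_icc_endpoints (hinj : WindowInj v 1 k) {p q p' q' : ℕ}
    (h1 : 1 ≤ p) (hpq : p ≤ q) (hq : q ≤ k) (h1' : 1 ≤ p') (hpq' : p' ≤ q') (hq' : q' ≤ k)
    (heq : (Finset.Icc p q).image v = (Finset.Icc p' q').image v) : p = p' ∧ q = q' := by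
  have hpm : p' ≤ p ∧ p ≤ q' := (idx_mem_iff hinj h1' hq' (by omega) (by omega)).1
    (heq ▸ Finset.mem_image.2 ⟨p, Finset.mem_Icc.2 ⟨le_rfl, hpq⟩, rfl⟩)
  have hqm : p' ≤ q ∧ q ≤ q' := (idx_mem_iff hinj h1' hq' (by omega) (by omega)).1
    (heq ▸ Finset.mem_image.2 ⟨q, Finset.mem_Icc.2 ⟨hpq, le_rfl⟩, rfl⟩)
  have hpm' : p ≤ p' ∧ p' ≤ q := (idx_mem_iff hinj h1 hq (by omega) (by omega)).1
    (heq ▸ Finset.mem_image.2 ⟨p', Finset.mem_Icc.2 ⟨le_rfl, hpq'⟩, rfl⟩)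
  have hqm' : p ≤ q' ∧ q' ≤ q := (idx_mem_iff hinj h1 hq (by omega) (by omega)).1
    (heq ▸ Finset.mem_image.2 ⟨q', Finset.mem_Icc.2 ⟨hpq', le_rfl⟩, rfl⟩)
  omega

lemma window_in_max
    (hcad : IsCadetWindow T v 1 k)
    (hconn : SConnected S T ((Finset.Icc 1 k).image v))
    (hboxes : ∀ r, 1 ≤ r → r ≤ k' → 1 ≤ a r ∧ a r ≤ b r ∧ b r ≤ k ∧
      IsMaxSCadetSet S T ((Finset.Icc (a r) (b r)).image v))
    (hall : ∀ Z, IsMaxSCadetSet S T Z → Z ⊆ (Finset.Icc 1 k).image v →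
      ∃ r, 1 ≤ r ∧ r ≤ k' ∧ Z = (Finset.Icc (a r) (b r)).image v)
    {p q : ℕ} (hwin : IsSCadetWindow S T v p q) (hq : q ≤ k) :
    ∃ r, 1 ≤ r ∧ r ≤ k' ∧ a r ≤ p ∧ q ≤ b r := by
  classical
  have hinj : WindowInj v 1 k := cadet_window_inj hcad
  have hp : 1 ≤ p := hwin.1.1
  have hpq : p ≤ q := hwin.1.2.1
  obtain ⟨t, w, o, hmax, hko, hwv⟩ := exists_max_ext hcad
  have heq : ∀ i, i ≤ q - p → w (p + o + i) = v (p + i) := by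
    intro i hi
    rw [show p + o + i = (p + i) + o by omega]
    exact hwv (p + i) (by omega) (by omega)
  have hwwin : IsSCadetWindow S T w (p + o) (p + o + (q - p)) :=
    window_congr (by omega) heq (by rwa [show p + (q - p) = q by omega])
  obtain ⟨B, hBwin, hBge, hBle, hBmax⟩ :
      ∃ B, IsSCadetWindow S T w (p + o) B ∧ p + o + (q - p) ≤ B ∧ B ≤ t ∧
        (B = t ∨ ¬ IsSCadetWindow S T w (p + o) (B + 1)) := by
    refine ⟨Nat.findGreatest (fun b' => IsSCadetWindow S T w (p + o) b') t,
      Nat.findGreatest_spec (by omega) hwwin, Nat.le_findGreatest (by omega) hwwin,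
      Nat.findGreatest_le t, ?_⟩
    rcases eq_or_lt_of_le (Nat.findGreatest_le (P := fun b' => IsSCadetWindow S T w (p + o) b') t)
      with h | h
    · exact Or.inl h
    · right
      intro hcon
      have := Nat.le_findGreatest h hcon
      exact Nat.not_succ_le_self _ this
  obtain ⟨A, hAwin, hAle, hA1, hAmax⟩ :
      ∃ A, IsSCadetWindow S T w A B ∧ A ≤ p + o ∧ 1 ≤ A ∧
        (A = 1 ∨ ¬ IsSCadetWindow S T w (A - 1) B) := by
    have hexQ : ∃ a', IsSCadetWindow S T w a' B := ⟨p + o, hBwin⟩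
    have hAwin := Nat.find_spec hexQ
    have hA1 : 1 ≤ Nat.find hexQ := hAwin.1.1
    refine ⟨Nat.find hexQ, hAwin, Nat.find_min' hexQ hBwin, hA1, ?_⟩
    rcases eq_or_lt_of_le hA1 with h | h
    · exact Or.inl h.symm
    · right
      exact Nat.find_min hexQ (show Nat.find hexQ - 1 < Nat.find hexQ by omega)
  have hmaxwin : IsMaxSCadetWindow S T t w A B := by
    refine ⟨hBle, hAwin, hAmax, ?_⟩
    rcases hBmax with h | h
    · exact Or.inl h
    · right
      intro hcon
      exact h (subwindow hcon hAle (by omega) le_rfl)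
  have hYmax : IsMaxSCadetSet S T ((Finset.Icc A B).image w) :=
    ⟨t, w, A, B, hmax, cadet_window_inj hmax.1, hmaxwin, rfl⟩
  have hvp : v p ∈ ((Finset.Icc A B).image w) :=
    Finset.mem_image.2 ⟨p + o, Finset.mem_Icc.2 ⟨by omega, by omega⟩,
      hwv p hp (by omega)⟩
  have hvq : v q ∈ ((Finset.Icc A B).image w) :=
    Finset.mem_image.2 ⟨q + o, Finset.mem_Icc.2 ⟨by omega, by omega⟩,
      hwv q (by omega) hq⟩
  have hvpX : v p ∈ (Finset.Icc 1 k).image v :=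
    Finset.mem_image.2 ⟨p, Finset.mem_Icc.2 ⟨hp, by omega⟩, rfl⟩
  have hsub : ((Finset.Icc A B).image w) ⊆ (Finset.Icc 1 k).image v := by
    rcases hconn.2.1 _ hYmax with h | h
    · exfalso
      have hm : v p ∈ (Finset.Icc 1 k).image v ∩ (Finset.Icc A B).image w :=
        Finset.mem_inter.2 ⟨hvpX, hvp⟩
      rw [h] at hm
      simp at hm
    · exact h
  obtain ⟨r, hr1, hr2, hreq⟩ := hall _ hYmax hsub
  obtain ⟨ha1, hab, hbk, _⟩ := hboxes r hr1 hr2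
  refine ⟨r, hr1, hr2, ?_, ?_⟩
  · exact ((idx_mem_iff hinj ha1 hbk hp (by omega)).1 (hreq ▸ hvp)).1
  · exact ((idx_mem_iff hinj ha1 hbk (by omega) hq).1 (hreq ▸ hvq)).2

lemma max_corr
    (hcad : IsCadetWindow T v 1 k)
    (hboxes : ∀ r, 1 ≤ r → r ≤ k' → 1 ≤ a r ∧ a r ≤ b r ∧ b r ≤ k ∧
      IsMaxSCadetSet S T ((Finset.Icc (a r) (b r)).image v))
    {r : ℕ} (hr1 : 1 ≤ r) (hr2 : r ≤ k') :
    ∃ (t₀ : ℕ) (v₀ : ℕ → Fin n) (a₀ b₀ : ℕ), IsMaxCadetSeq T t₀ v₀ ∧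
      IsMaxSCadetWindow S T t₀ v₀ a₀ b₀ ∧ a₀ + (b r - a r) = b₀ ∧
      ∀ i, i ≤ b r - a r → v₀ (a₀ + i) = v (a r + i) := by
  have hinj : WindowInj v 1 k := cadet_window_inj hcad
  obtain ⟨ha1, hab, hbk, hset⟩ := hboxes r hr1 hr2
  obtain ⟨t₀, v₀, a₀, b₀, hmax₀, hinj₀, hmw₀, heq₀⟩ := hset
  have hwin₀ : IsSCadetWindow S T v₀ a₀ b₀ := hmw₀.2.1
  have ha₀1 : 1 ≤ a₀ := hwin₀.1.1
  have hab₀ : a₀ ≤ b₀ := hwin₀.1.2.1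
  have hb₀ : b₀ ≤ t₀ := hmw₀.1
  have himg : ∀ i, a₀ ≤ i → i ≤ b₀ → ∃ j, 1 ≤ j ∧ j ≤ k ∧ v j = v₀ i := by
    intro i h1 h2
    have hm : v₀ i ∈ (Finset.Icc (a r) (b r)).image v := by
      rw [heq₀]
      exact Finset.mem_image.2 ⟨i, Finset.mem_Icc.2 ⟨h1, h2⟩, rfl⟩
    obtain ⟨j, hj, hje⟩ := Finset.mem_image.1 hm
    rw [Finset.mem_Icc] at hj
    exact ⟨j, by omega, by omega, hje⟩
  obtain ⟨p, hp1, hp2, hp3⟩ := chain_embed hcad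
    (isCadetWindow_mono hmax₀.1 ha₀1 hab₀ hb₀) himg
  have himeq : (Finset.Icc p (p + (b₀ - a₀))).image v = (Finset.Icc (a r) (b r)).image v := by
    have hs : ∀ i, i ≤ b₀ - a₀ → v (p + i) = v₀ (a₀ + i) := fun i hi => (hp3 i hi).symm
    rw [image_window_shift hs, show a₀ + (b₀ - a₀) = b₀ by omega]
    exact heq₀.symm
  obtain ⟨hpe, hqe⟩ := image_icc_endpoints hinj hp1 (by omega) hp2 ha1 hab hbk himeq
  have hd : b₀ - a₀ = b r - a r := by omega
  refine ⟨t₀, v₀, a₀, b₀, hmax₀, hmw₀, by omega, ?_⟩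
  intro i hi
  rw [show a r + i = p + i by omega]
  exact hp3 i (by omega)

lemma win_r
    (hcad : IsCadetWindow T v 1 k)
    (hboxes : ∀ r, 1 ≤ r → r ≤ k' → 1 ≤ a r ∧ a r ≤ b r ∧ b r ≤ k ∧
      IsMaxSCadetSet S T ((Finset.Icc (a r) (b r)).image v))
    {r : ℕ} (hr1 : 1 ≤ r) (hr2 : r ≤ k') : IsSCadetWindow S T v (a r) (b r) := by
  obtain ⟨ha1, hab, hbk, _⟩ := hboxes r hr1 hr2
  obtain ⟨t₀, v₀, a₀, b₀, hmax₀, hmw₀, hd, hcorr⟩ := max_corr hcad hboxes hr1 hr2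
  have := window_congr (w := v) (v := v₀) (p := a r) (a := a₀) (d := b r - a r)
    ha1 (fun i hi => (hcorr i hi).symm) (by rw [hd]; exact hmw₀.2.1)
  rwa [show a r + (b r - a r) = b r by omega] at this

lemma not_win_right
    (hcad : IsCadetWindow T v 1 k)
    (hboxes : ∀ r, 1 ≤ r → r ≤ k' → 1 ≤ a r ∧ a r ≤ b r ∧ b r ≤ k ∧
      IsMaxSCadetSet S T ((Finset.Icc (a r) (b r)).image v))
    {r : ℕ} (hr1 : 1 ≤ r) (hr2 : r ≤ k') {b'' : ℕ} (hb : b r < b'') (hbk'' : b'' ≤ k) :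
    ¬ IsSCadetWindow S T v (a r) b'' := by
  intro hcon
  obtain ⟨ha1, hab, hbk, _⟩ := hboxes r hr1 hr2
  have hw1 : IsSCadetWindow S T v (a r) (b r + 1) := subwindow hcon le_rfl (by omega) (by omega)
  obtain ⟨t₀, v₀, a₀, b₀, hmax₀, hmw₀, hd, hcorr⟩ := max_corr hcad hboxes hr1 hr2
  have ha₀1 : 1 ≤ a₀ := hmw₀.2.1.1.1
  have hab₀ : a₀ ≤ b₀ := hmw₀.2.1.1.2.1
  have hb₀t : b₀ ≤ t₀ := hmw₀.1
  have hcadet : T.IsCadet (v (b r)) (v (b r + 1)) := by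
    have := hcad.2.2 (b r + 1) (by omega) (by omega)
    rwa [show b r + 1 - 1 = b r by omega] at this
  have hvb : v₀ b₀ = v (b r) := by
    have := hcorr (b r - a r) le_rfl
    rwa [show a₀ + (b r - a r) = b₀ by omega, show a r + (b r - a r) = b r by omega] at this
  by_cases hbt : b₀ = t₀
  · exact hmax₀.2.1 (v (b r + 1)) (by rw [← hbt, hvb]; exact hcadet.1)
  · have hnw : ¬ IsSCadetWindow S T v₀ a₀ (b₀ + 1) := by
      rcases hmw₀.2.2.2 with h | h
      · exact absurd h hbt
      · exact h
    have hchain₀ : T.IsCadet (v₀ b₀) (v₀ (b₀ + 1)) := by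
      have := hmax₀.1.2.2 (b₀ + 1) (by omega) (by omega)
      rwa [show b₀ + 1 - 1 = b₀ by omega] at this
    have hnext : v₀ (b₀ + 1) = v (b r + 1) := by
      rw [hvb] at hchain₀
      exact cadet_unique hchain₀ hcadet
    apply hnw
    have heq2 : ∀ i, i ≤ b r + 1 - a r → v₀ (a₀ + i) = v (a r + i) := by
      intro i hi
      by_cases hie : i = b r + 1 - a r
      · rw [hie, show a₀ + (b r + 1 - a r) = b₀ + 1 by omega,
          show a r + (b r + 1 - a r) = b r + 1 by omega]
        exact hnext
      · exact hcorr i (by omega)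
    have := window_congr (w := v₀) (v := v) (p := a₀) (a := a r) (d := b r + 1 - a r)
      ha₀1 heq2 (by rwa [show a r + (b r + 1 - a r) = b r + 1 by omega])
    rwa [show a₀ + (b r + 1 - a r) = b₀ + 1 by omega] at this

lemma not_win_left
    (hcad : IsCadetWindow T v 1 k)
    (hboxes : ∀ r, 1 ≤ r → r ≤ k' → 1 ≤ a r ∧ a r ≤ b r ∧ b r ≤ k ∧
      IsMaxSCadetSet S T ((Finset.Icc (a r) (b r)).image v))
    {r : ℕ} (hr1 : 1 ≤ r) (hr2 : r ≤ k') {a'' : ℕ} (ha : a'' < a r) :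
    ¬ IsSCadetWindow S T v a'' (b r) := by
  intro hcon
  obtain ⟨ha1, hab, hbk, _⟩ := hboxes r hr1 hr2
  have ha''1 : 1 ≤ a'' := hcon.1.1
  have ha2 : 2 ≤ a r := by omega
  have hw1 : IsSCadetWindow S T v (a r - 1) (b r) := subwindow hcon (by omega) (by omega) le_rfl
  obtain ⟨t₀, v₀, a₀, b₀, hmax₀, hmw₀, hd, hcorr⟩ := max_corr hcad hboxes hr1 hr2
  have ha₀1 : 1 ≤ a₀ := hmw₀.2.1.1.1
  have hab₀ : a₀ ≤ b₀ := hmw₀.2.1.1.2.1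
  have hb₀t : b₀ ≤ t₀ := hmw₀.1
  have hcadet : T.IsCadet (v (a r - 1)) (v (a r)) := by
    have := hcad.2.2 (a r) (by omega) (by omega)
    exact this
  have hva : v₀ a₀ = v (a r) := by
    have := hcorr 0 (by omega)
    simpa using this
  by_cases ha₀ : a₀ = 1
  · refine hmax₀.2.2 (v (a r - 1)) ?_
    have hv1 : v₀ 1 = v (a r) := by rw [← ha₀]; exact hva
    rw [hv1]
    exact hcadet
  · have hnw : ¬ IsSCadetWindow S T v₀ (a₀ - 1) b₀ := by
      rcases hmw₀.2.2.1 with h | h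
      · exact absurd h ha₀
      · exact h
    have ha₀2 : 2 ≤ a₀ := by omega
    have hchain₀ : T.IsCadet (v₀ (a₀ - 1)) (v₀ a₀) := hmax₀.1.2.2 a₀ (by omega) (by omega)
    have hpar : v₀ (a₀ - 1) = v (a r - 1) := by
      have h1 := hchain₀.1.2
      have h2 := hcadet.1.2
      rw [hva] at h1
      exact h1.symm.trans h2
    apply hnw
    have heq2 : ∀ i, i ≤ b r - (a r - 1) → v₀ (a₀ - 1 + i) = v (a r - 1 + i) := by
      intro i hi
      by_cases hie : i = 0
      · rw [hie]
        simpa using hpar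
      · rw [show a₀ - 1 + i = a₀ + (i - 1) by omega,
          show a r - 1 + i = a r + (i - 1) by omega]
        exact hcorr (i - 1) (by omega)
    have := window_congr (w := v₀) (v := v) (p := a₀ - 1) (a := a r - 1)
      (d := b r - (a r - 1)) (by omega) heq2
      (by rwa [show a r - 1 + (b r - (a r - 1)) = b r by omega])
    rwa [show a₀ - 1 + (b r - (a r - 1)) = b₀ by omega] at this

lemma a_strictmono
    (hcad : IsCadetWindow T v 1 k)
    (hboxes : ∀ r, 1 ≤ r → r ≤ k' → 1 ≤ a r ∧ a r ≤ b r ∧ b r ≤ k ∧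
      IsMaxSCadetSet S T ((Finset.Icc (a r) (b r)).image v))
    (hmono : ∀ r s, 1 ≤ r → r < s → s ≤ k' → b r < b s)
    {r s : ℕ} (hr1 : 1 ≤ r) (hrs : r < s) (hsk : s ≤ k') : a r < a s := by
  by_contra hle
  push_neg at hle
  obtain ⟨har1, harb, hbrk, _⟩ := hboxes r hr1 (by omega)
  obtain ⟨has1, hasb, hbsk, _⟩ := hboxes s (by omega) hsk
  have hbs : b r < b s := hmono r s hr1 hrs hsk
  have hwins : IsSCadetWindow S T v (a s) (b s) := win_r hcad hboxes (by omega) hsk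
  have hsub : IsSCadetWindow S T v (a r) (b r + 1) :=
    subwindow hwins hle (by omega) (by omega)
  exact not_win_right hcad hboxes hr1 (by omega) (by omega : b r < b r + 1)
    (by omega : b r + 1 ≤ k) hsub

end Main


section Invol

variable {n m : ℕ} {T : PlaneTree n m} {S : Fin n → Fin n → Finset ℤ}
variable {k : ℕ} {v : ℕ → Fin n}

lemma singleton_image {c : ℕ} : (Finset.Icc c c).image v = {v c} := by
  rw [Finset.Icc_self, Finset.image_singleton]

lemma merge_left
    (hcad : IsCadetWindow T v 1 k) (hk2 : 2 ≤ k)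
    (hP : ∀ q, 2 ≤ q → q ≤ k → IsSCadetWindow S T v 2 q → IsSCadetWindow S T v 1 q)
    {B : Finset (Finset (Fin n))} (hB : IsSBoxingOf S T ((Finset.Icc 1 k).image v) B)
    (h1 : {v 1} ∈ B) :
    ∃ B', B' = insert ({v 1} ∪ theBlock B (v 2)) ((B.erase {v 1}).erase (theBlock B (v 2))) ∧
      IsSBoxingOf S T ((Finset.Icc 1 k).image v) B' ∧ B'.card + 1 = B.card ∧
      {v 1} ∉ B' ∧
      insert {v 1} (insert (theBlock B' (v 1) \ {v 1}) (B'.erase (theBlock B' (v 1)))) = B := by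
  classical
  have hinj : WindowInj v 1 k := cadet_window_inj hcad
  have hv1X : v 1 ∈ (Finset.Icc 1 k).image v :=
    Finset.mem_image.2 ⟨1, Finset.mem_Icc.2 ⟨le_rfl, by omega⟩, rfl⟩
  have hv2X : v 2 ∈ (Finset.Icc 1 k).image v :=
    Finset.mem_image.2 ⟨2, Finset.mem_Icc.2 ⟨by omega, hk2⟩, rfl⟩
  have hne12 : v 1 ≠ v 2 := fun h => by
    have := hinj 1 2 le_rfl (by omega) (by omega) hk2 h
    omega
  obtain ⟨Z, hZm, _⟩ := hB.2 (v 2) hv2X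
  have hex2 : ∃ Y ∈ B, v 2 ∈ Y := ⟨Z, hZm.1, hZm.2⟩
  obtain ⟨hY2B, hY22⟩ := theBlock_spec hex2
  set Y2 := theBlock B (v 2) with hY2def
  have hY2ne1 : Y2 ≠ {v 1} := by
    intro h
    rw [h, Finset.mem_singleton] at hY22
    exact hne12 hY22.symm
  have hv1Y2 : v 1 ∉ Y2 := by
    intro hmem
    obtain ⟨W, _, huniq⟩ := hB.2 (v 1) hv1X
    exact hY2ne1 ((huniq _ ⟨hY2B, hmem⟩).trans
      (huniq _ ⟨h1, Finset.mem_singleton_self _⟩).symm)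
  obtain ⟨p₂, q₂, hp₂1, hpq₂, hq₂k, hwin₂, hY2eq⟩ :=
    sbox_to_window hcad (hB.1 _ hY2B).1 (hB.1 _ hY2B).2
  have h2m : p₂ ≤ 2 ∧ 2 ≤ q₂ :=
    (idx_mem_iff hinj hp₂1 hq₂k (by omega) hk2).1 (hY2eq ▸ hY22)
  have h1m : ¬ (p₂ ≤ 1 ∧ 1 ≤ q₂) := by
    intro hc
    exact hv1Y2 (hY2eq ▸ (idx_mem_iff hinj hp₂1 hq₂k le_rfl (by omega)).2 hc)
  have hp₂2 : p₂ = 2 := by omega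
  have hq₂2 : 2 ≤ q₂ := h2m.2
  have hwin1 : IsSCadetWindow S T v 1 q₂ := hP q₂ hq₂2 hq₂k (hp₂2 ▸ hwin₂)
  have hUeq : {v 1} ∪ Y2 = (Finset.Icc 1 q₂).image v := by
    rw [hY2eq, hp₂2]
    ext x
    simp only [Finset.mem_union, Finset.mem_singleton, Finset.mem_image, Finset.mem_Icc]
    constructor
    · rintro (rfl | ⟨j, hj, rfl⟩)
      · exact ⟨1, ⟨le_rfl, by omega⟩, rfl⟩
      · exact ⟨j, ⟨by omega, hj.2⟩, rfl⟩
    · rintro ⟨j, ⟨hj1, hj2⟩, rfl⟩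
      by_cases hj : j = 1
      · subst hj
        exact Or.inl rfl
      · exact Or.inr ⟨j, ⟨by omega, hj2⟩, rfl⟩
  have hUbox : IsSBox S T ({v 1} ∪ Y2) := hUeq ▸ isSBox_image hwin1
  have hUX : ({v 1} ∪ Y2) ⊆ (Finset.Icc 1 k).image v := by
    rw [hUeq]
    exact Finset.image_subset_image (Finset.Icc_subset_Icc le_rfl hq₂k)
  have hv1U : v 1 ∈ {v 1} ∪ Y2 := Finset.mem_union_left _ (Finset.mem_singleton_self _)
  have hv2U : v 2 ∈ {v 1} ∪ Y2 := Finset.mem_union_right _ hY22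
  have hUnotB' : ({v 1} ∪ Y2) ∉ (B.erase {v 1}).erase Y2 := by
    intro hmem
    have hUB : ({v 1} ∪ Y2) ∈ B :=
      Finset.mem_of_mem_erase (Finset.mem_of_mem_erase hmem)
    obtain ⟨W, _, huniq⟩ := hB.2 (v 1) hv1X
    have hU1 : ({v 1} ∪ Y2) = {v 1} := (huniq _ ⟨hUB, hv1U⟩).trans
      (huniq _ ⟨h1, Finset.mem_singleton_self _⟩).symm
    rw [hU1, Finset.mem_singleton] at hv2U
    exact hne12 hv2U.symm
  have hY2mem' : Y2 ∈ B.erase {v 1} := Finset.mem_erase.2 ⟨hY2ne1, hY2B⟩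
  have hbox' : IsSBoxingOf S T ((Finset.Icc 1 k).image v)
      (insert ({v 1} ∪ Y2) ((B.erase {v 1}).erase Y2)) := by
    constructor
    · intro Y hY
      rcases Finset.mem_insert.1 hY with rfl | hYmem
      · exact ⟨hUbox, hUX⟩
      · exact hB.1 Y (Finset.mem_of_mem_erase (Finset.mem_of_mem_erase hYmem))
    · intro u hu
      obtain ⟨j, hj, rfl⟩ := Finset.mem_image.1 hu
      rw [Finset.mem_Icc] at hj
      by_cases hjq : j ≤ q₂
      · refine ⟨{v 1} ∪ Y2, ⟨Finset.mem_insert_self _ _, ?_⟩, ?_⟩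
        · rw [hUeq]
          exact Finset.mem_image.2 ⟨j, Finset.mem_Icc.2 ⟨hj.1, hjq⟩, rfl⟩
        · rintro W ⟨hW, hjW⟩
          rcases Finset.mem_insert.1 hW with rfl | hWmem
          · rfl
          · exfalso
            have hWB : W ∈ B := Finset.mem_of_mem_erase (Finset.mem_of_mem_erase hWmem)
            have hWne1 : W ≠ {v 1} := (Finset.mem_erase.1 (Finset.mem_of_mem_erase hWmem)).1
            have hWneY2 : W ≠ Y2 := (Finset.mem_erase.1 hWmem).1
            obtain ⟨Z₀, _, huniq⟩ := hB.2 (v j) hu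
            by_cases hj1 : j = 1
            · subst hj1
              exact hWne1 ((huniq _ ⟨hWB, hjW⟩).trans
                (huniq _ ⟨h1, Finset.mem_singleton_self _⟩).symm)
            · have hjY2 : v j ∈ Y2 := by
                rw [hY2eq]
                exact Finset.mem_image.2 ⟨j, Finset.mem_Icc.2 ⟨by omega, hjq⟩, rfl⟩
              exact hWneY2 ((huniq _ ⟨hWB, hjW⟩).trans (huniq _ ⟨hY2B, hjY2⟩).symm)
      · obtain ⟨Z₀, ⟨hZ₀B, hZ₀j⟩, huniq⟩ := hB.2 (v j) hu
        have hZ₀ne1 : Z₀ ≠ {v 1} := by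
          rintro rfl
          rw [Finset.mem_singleton] at hZ₀j
          have := hinj j 1 hj.1 hj.2 le_rfl (by omega) hZ₀j
          omega
        have hZ₀neY2 : Z₀ ≠ Y2 := by
          rintro rfl
          have := (idx_mem_iff hinj hp₂1 hq₂k hj.1 hj.2).1 (hY2eq ▸ hZ₀j)
          omega
        refine ⟨Z₀, ⟨Finset.mem_insert_of_mem
          (Finset.mem_erase.2 ⟨hZ₀neY2, Finset.mem_erase.2 ⟨hZ₀ne1, hZ₀B⟩⟩), hZ₀j⟩, ?_⟩
        rintro W ⟨hW, hjW⟩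
        rcases Finset.mem_insert.1 hW with rfl | hWmem
        · exfalso
          have := (idx_mem_iff hinj (le_rfl : (1:ℕ) ≤ 1) hq₂k hj.1 hj.2).1 (hUeq ▸ hjW)
          omega
        · exact huniq _ ⟨Finset.mem_of_mem_erase (Finset.mem_of_mem_erase hWmem), hjW⟩
  have hcard : (insert ({v 1} ∪ Y2) ((B.erase {v 1}).erase Y2)).card + 1 = B.card := by
    rw [Finset.card_insert_of_notMem hUnotB', Finset.card_erase_of_mem hY2mem',
      Finset.card_erase_of_mem h1]
    have h2c : 1 < B.card := Finset.one_lt_card.2 ⟨{v 1}, h1, Y2, hY2B, Ne.symm hY2ne1⟩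
    omega
  have h1B' : {v 1} ∉ insert ({v 1} ∪ Y2) ((B.erase {v 1}).erase Y2) := by
    intro hmem
    rcases Finset.mem_insert.1 hmem with h | h
    · have hx : v 2 ∈ ({v 1} : Finset (Fin n)) := by
        rw [h]
        exact hv2U
      rw [Finset.mem_singleton] at hx
      exact hne12 hx.symm
    · exact (Finset.mem_erase.1 (Finset.mem_of_mem_erase h)).1 rfl
  have hTB : theBlock (insert ({v 1} ∪ Y2) ((B.erase {v 1}).erase Y2)) (v 1) = {v 1} ∪ Y2 :=
    theBlock_eq_of hbox' hv1X (Finset.mem_insert_self _ _) hv1U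
  refine ⟨insert ({v 1} ∪ Y2) ((B.erase {v 1}).erase Y2), rfl, hbox', hcard, h1B', ?_⟩
  rw [hTB]
  have hU1 : ({v 1} ∪ Y2) \ {v 1} = Y2 := by
    ext x
    simp only [Finset.mem_sdiff, Finset.mem_union, Finset.mem_singleton]
    constructor
    · rintro ⟨(rfl | h), hne⟩
      · exact absurd rfl hne
      · exact h
    · intro h
      refine ⟨Or.inr h, ?_⟩
      rintro rfl
      exact hv1Y2 h
  have hUer : (insert ({v 1} ∪ Y2) ((B.erase {v 1}).erase Y2)).erase ({v 1} ∪ Y2)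
      = (B.erase {v 1}).erase Y2 := Finset.erase_insert hUnotB'
  rw [hU1, hUer, Finset.insert_erase hY2mem', Finset.insert_erase h1]

lemma split_left
    (hcad : IsCadetWindow T v 1 k) (hk2 : 2 ≤ k)
    {B : Finset (Finset (Fin n))} (hB : IsSBoxingOf S T ((Finset.Icc 1 k).image v) B)
    (h1 : {v 1} ∉ B) :
    ∃ B', B' = insert {v 1} (insert (theBlock B (v 1) \ {v 1}) (B.erase (theBlock B (v 1)))) ∧
      IsSBoxingOf S T ((Finset.Icc 1 k).image v) B' ∧ B.card + 1 = B'.card ∧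
      {v 1} ∈ B' ∧
      insert ({v 1} ∪ theBlock B' (v 2)) ((B'.erase {v 1}).erase (theBlock B' (v 2))) = B := by
  classical
  have hinj : WindowInj v 1 k := cadet_window_inj hcad
  have hv1X : v 1 ∈ (Finset.Icc 1 k).image v :=
    Finset.mem_image.2 ⟨1, Finset.mem_Icc.2 ⟨le_rfl, by omega⟩, rfl⟩
  have hv2X : v 2 ∈ (Finset.Icc 1 k).image v :=
    Finset.mem_image.2 ⟨2, Finset.mem_Icc.2 ⟨by omega, hk2⟩, rfl⟩
  have hne12 : v 1 ≠ v 2 := fun h => by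
    have := hinj 1 2 le_rfl (by omega) (by omega) hk2 h
    omega
  obtain ⟨Z, hZm, _⟩ := hB.2 (v 1) hv1X
  have hex1 : ∃ Y ∈ B, v 1 ∈ Y := ⟨Z, hZm.1, hZm.2⟩
  obtain ⟨hY1B, hY11⟩ := theBlock_spec hex1
  set Y1 := theBlock B (v 1) with hY1def
  have hY1ne : Y1 ≠ {v 1} := by
    intro h
    rw [h] at hY1B
    exact h1 hY1B
  obtain ⟨p₁, q₁, hp₁1, hpq₁, hq₁k, hwin₁, hY1eq⟩ :=
    sbox_to_window hcad (hB.1 _ hY1B).1 (hB.1 _ hY1B).2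
  have h1m : p₁ ≤ 1 ∧ 1 ≤ q₁ :=
    (idx_mem_iff hinj hp₁1 hq₁k le_rfl (by omega)).1 (hY1eq ▸ hY11)
  have hp₁1' : p₁ = 1 := by omega
  have hq₁2 : 2 ≤ q₁ := by
    by_contra hq
    have hq1 : q₁ = 1 := by omega
    apply hY1ne
    rw [hY1eq, hp₁1', hq1, singleton_image]
  have hv2Y1 : v 2 ∈ Y1 := by
    rw [hY1eq]
    exact Finset.mem_image.2 ⟨2, Finset.mem_Icc.2 ⟨by omega, hq₁2⟩, rfl⟩
  have hD : Y1 \ {v 1} = (Finset.Icc 2 q₁).image v := by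
    rw [hY1eq, hp₁1']
    ext x
    simp only [Finset.mem_sdiff, Finset.mem_image, Finset.mem_Icc, Finset.mem_singleton]
    constructor
    · rintro ⟨⟨j, ⟨hj1, hj2⟩, rfl⟩, hne⟩
      refine ⟨j, ⟨?_, hj2⟩, rfl⟩
      rcases Nat.lt_or_ge j 2 with h | h
      · exfalso
        have : j = 1 := by omega
        exact hne (by rw [this])
      · exact h
    · rintro ⟨j, ⟨hj1, hj2⟩, rfl⟩
      refine ⟨⟨j, ⟨by omega, hj2⟩, rfl⟩, ?_⟩
      intro h
      have := hinj j 1 (by omega) (by omega) le_rfl (by omega) h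
      omega
  have hwinD : IsSCadetWindow S T v 2 q₁ := subwindow hwin₁ (by omega) hq₁2 le_rfl
  have hbox1 : IsSBox S T ({v 1} : Finset (Fin n)) := by
    rw [← singleton_image (v := v) (c := 1)]
    exact isSBox_image (subwindow hwin₁ (by omega) le_rfl (by omega))
  have hboxD : IsSBox S T (Y1 \ {v 1}) := hD ▸ isSBox_image hwinD
  have hDX : (Y1 \ {v 1}) ⊆ (Finset.Icc 1 k).image v :=
    (Finset.sdiff_subset).trans (hB.1 _ hY1B).2
  have h1X : ({v 1} : Finset (Fin n)) ⊆ (Finset.Icc 1 k).image v :=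
    Finset.singleton_subset_iff.2 hv1X
  have hv2D : v 2 ∈ Y1 \ {v 1} := by
    rw [Finset.mem_sdiff, Finset.mem_singleton]
    exact ⟨hv2Y1, fun h => hne12 h.symm⟩
  have hv1D : v 1 ∉ Y1 \ {v 1} := by
    rw [Finset.mem_sdiff]
    rintro ⟨_, h⟩
    exact h (Finset.mem_singleton_self _)
  have hn1 : ({v 1} : Finset (Fin n)) ∉ insert (Y1 \ {v 1}) (B.erase Y1) := by
    intro hmem
    rcases Finset.mem_insert.1 hmem with h | h
    · have : v 1 ∈ Y1 \ {v 1} := by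
        rw [← h]
        exact Finset.mem_singleton_self _
      exact hv1D this
    · exact h1 (Finset.mem_of_mem_erase h)
  have hn2 : (Y1 \ {v 1}) ∉ B.erase Y1 := by
    intro hmem
    have hDB : (Y1 \ {v 1}) ∈ B := Finset.mem_of_mem_erase hmem
    obtain ⟨W, _, huniq⟩ := hB.2 (v 2) hv2X
    have : (Y1 \ {v 1}) = Y1 := (huniq _ ⟨hDB, hv2D⟩).trans (huniq _ ⟨hY1B, hv2Y1⟩).symm
    rw [← this] at hY11
    exact hv1D hY11
  have hbox' : IsSBoxingOf S T ((Finset.Icc 1 k).image v)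
      (insert {v 1} (insert (Y1 \ {v 1}) (B.erase Y1))) := by
    constructor
    · intro Y hY
      rcases Finset.mem_insert.1 hY with rfl | hYmem
      · exact ⟨hbox1, h1X⟩
      · rcases Finset.mem_insert.1 hYmem with rfl | hYmem2
        · exact ⟨hboxD, hDX⟩
        · exact hB.1 Y (Finset.mem_of_mem_erase hYmem2)
    · intro u hu
      obtain ⟨j, hj, rfl⟩ := Finset.mem_image.1 hu
      rw [Finset.mem_Icc] at hj
      by_cases hj1 : j = 1
      · subst hj1
        refine ⟨{v 1}, ⟨Finset.mem_insert_self _ _, Finset.mem_singleton_self _⟩, ?_⟩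
        rintro W ⟨hW, hjW⟩
        rcases Finset.mem_insert.1 hW with rfl | hWmem
        · rfl
        · exfalso
          rcases Finset.mem_insert.1 hWmem with rfl | hWmem2
          · exact hv1D hjW
          · have hWB : W ∈ B := Finset.mem_of_mem_erase hWmem2
            obtain ⟨Z₀, _, huniq⟩ := hB.2 (v 1) hv1X
            have : W = Y1 := (huniq _ ⟨hWB, hjW⟩).trans (huniq _ ⟨hY1B, hY11⟩).symm
            exact (Finset.mem_erase.1 hWmem2).1 this
      · by_cases hjq : j ≤ q₁
        · have hjD : v j ∈ Y1 \ {v 1} := by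
            rw [hD]
            exact Finset.mem_image.2 ⟨j, Finset.mem_Icc.2 ⟨by omega, hjq⟩, rfl⟩
          have hjY1 : v j ∈ Y1 := (Finset.mem_sdiff.1 hjD).1
          refine ⟨Y1 \ {v 1}, ⟨Finset.mem_insert_of_mem (Finset.mem_insert_self _ _), hjD⟩, ?_⟩
          rintro W ⟨hW, hjW⟩
          rcases Finset.mem_insert.1 hW with rfl | hWmem
          · exfalso
            rw [Finset.mem_singleton] at hjW
            have := hinj j 1 hj.1 hj.2 le_rfl (by omega) hjW
            omega
          · rcases Finset.mem_insert.1 hWmem with rfl | hWmem2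
            · rfl
            · exfalso
              have hWB : W ∈ B := Finset.mem_of_mem_erase hWmem2
              obtain ⟨Z₀, _, huniq⟩ := hB.2 (v j) hu
              have : W = Y1 := (huniq _ ⟨hWB, hjW⟩).trans (huniq _ ⟨hY1B, hjY1⟩).symm
              exact (Finset.mem_erase.1 hWmem2).1 this
        · obtain ⟨Z₀, ⟨hZ₀B, hZ₀j⟩, huniq⟩ := hB.2 (v j) hu
          have hZ₀neY1 : Z₀ ≠ Y1 := by
            rintro rfl
            have := (idx_mem_iff hinj hp₁1 hq₁k hj.1 hj.2).1 (hY1eq ▸ hZ₀j)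
            omega
          refine ⟨Z₀, ⟨Finset.mem_insert_of_mem (Finset.mem_insert_of_mem
            (Finset.mem_erase.2 ⟨hZ₀neY1, hZ₀B⟩)), hZ₀j⟩, ?_⟩
          rintro W ⟨hW, hjW⟩
          rcases Finset.mem_insert.1 hW with rfl | hWmem
          · exfalso
            rw [Finset.mem_singleton] at hjW
            have := hinj j 1 hj.1 hj.2 le_rfl (by omega) hjW
            omega
          · rcases Finset.mem_insert.1 hWmem with rfl | hWmem2
            · exfalso
              have := (idx_mem_iff hinj (by omega : (1:ℕ) ≤ 2) hq₁k hj.1 hj.2).1 (hD ▸ hjW)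
              omega
            · exact huniq _ ⟨Finset.mem_of_mem_erase hWmem2, hjW⟩
  have hcard : B.card + 1 = (insert {v 1} (insert (Y1 \ {v 1}) (B.erase Y1))).card := by
    rw [Finset.card_insert_of_notMem hn1, Finset.card_insert_of_notMem hn2,
      Finset.card_erase_of_mem hY1B]
    have : 1 ≤ B.card := Finset.card_pos.2 ⟨Y1, hY1B⟩
    omega
  have hTB : theBlock (insert {v 1} (insert (Y1 \ {v 1}) (B.erase Y1))) (v 2) = Y1 \ {v 1} :=
    theBlock_eq_of hbox' hv2X (Finset.mem_insert_of_mem (Finset.mem_insert_self _ _)) hv2D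
  refine ⟨insert {v 1} (insert (Y1 \ {v 1}) (B.erase Y1)), rfl, hbox', hcard,
    Finset.mem_insert_self _ _, ?_⟩
  rw [hTB]
  have hu : {v 1} ∪ (Y1 \ {v 1}) = Y1 := by
    ext x
    simp only [Finset.mem_union, Finset.mem_singleton, Finset.mem_sdiff]
    constructor
    · rintro (rfl | ⟨h, _⟩)
      · exact hY11
      · exact h
    · intro h
      by_cases hx : x = v 1
      · exact Or.inl hx
      · exact Or.inr ⟨h, by simpa using hx⟩
  have he1 : (insert {v 1} (insert (Y1 \ {v 1}) (B.erase Y1))).erase {v 1}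
      = insert (Y1 \ {v 1}) (B.erase Y1) := Finset.erase_insert hn1
  rw [hu, he1, Finset.erase_insert hn2, Finset.insert_erase hY1B]

lemma contrib_zero_left
    (hcad : IsCadetWindow T v 1 k) (hk2 : 2 ≤ k)
    (hP : ∀ q, 2 ≤ q → q ≤ k → IsSCadetWindow S T v 2 q → IsSCadetWindow S T v 1 q) :
    contrib S T ((Finset.Icc 1 k).image v) = 0 := by
  classical
  have hinj : WindowInj v 1 k := cadet_window_inj hcad
  set X := (Finset.Icc 1 k).image v with hX
  have hXcard : X.card = k := by
    rw [hX, Finset.card_image_of_injOn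
      (fun i hi j hj e => hinj i j (Finset.mem_Icc.1 hi).1 (Finset.mem_Icc.1 hi).2
        (Finset.mem_Icc.1 hj).1 (Finset.mem_Icc.1 hj).2 e), Nat.card_Icc]
    omega
  set g : Finset (Finset (Fin n)) → Finset (Finset (Fin n)) := fun B =>
    if IsSBoxingOf S T X B then
      (if {v 1} ∈ B then
        insert ({v 1} ∪ theBlock B (v 2)) ((B.erase {v 1}).erase (theBlock B (v 2)))
       else insert {v 1} (insert (theBlock B (v 1) \ {v 1}) (B.erase (theBlock B (v 1)))))
    else B with hg
  have key : ∀ B, IsSBoxingOf S T X B → IsSBoxingOf S T X (g B) ∧ g (g B) = B ∧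
      ((g B).card + 1 = B.card ∨ B.card + 1 = (g B).card) := by
    intro B hB
    by_cases h1 : {v 1} ∈ B
    · obtain ⟨B', hB'eq, hbox, hcard, hnot1, hrev⟩ := merge_left hcad hk2 hP hB h1
      have hgB : g B = B' := by
        rw [hg]
        simp only [if_pos hB, if_pos h1]
        exact hB'eq.symm
      have hgg : g B' = B := by
        rw [hg]
        simp only [if_pos hbox, if_neg hnot1]
        exact (if_pos hbox).trans hrev
      rw [hgB]
      exact ⟨hbox, hgg, Or.inl hcard⟩
    · obtain ⟨B', hB'eq, hbox, hcard, hin1, hrev⟩ := split_left hcad hk2 hB h1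
      have hgB : g B = B' := by
        rw [hg]
        simp only [if_pos hB, if_neg h1]
        exact hB'eq.symm
      have hgg : g B' = B := by
        rw [hg]
        simp only [if_pos hbox, if_pos hin1]
        exact (if_pos hbox).trans hrev
      rw [hgB]
      exact ⟨hbox, hgg, Or.inr hcard⟩
  rw [contrib]
  refine Finset.sum_ninvolution g ?_ ?_ (fun B => Finset.mem_univ _) ?_
  · intro B
    by_cases hB : IsSBoxingOf S T X B
    · obtain ⟨hbox, _, hcard⟩ := key B hB
      simp only [if_pos hB, if_pos hbox]
      have hBle : B.card ≤ k := hXcard ▸ boxing_card_le hB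
      have hgBle : (g B).card ≤ k := hXcard ▸ boxing_card_le hbox
      rw [hXcard]
      rcases hcard with h | h
      · rw [show k - (g B).card = (k - B.card) + 1 by omega, pow_succ]
        ring
      · rw [show k - B.card = (k - (g B).card) + 1 by omega, pow_succ]
        ring
    · have hgB : g B = B := by
        rw [hg]
        simp only [if_neg hB]
      rw [hgB]
      simp only [if_neg hB]
      ring
  · intro B hfB
    by_cases hB : IsSBoxingOf S T X B
    · obtain ⟨_, _, hcard⟩ := key B hB
      intro heq
      rw [heq] at hcard
      omega
    · exfalso
      apply hfB
      simp only [if_neg hB]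
  · intro B
    by_cases hB : IsSBoxingOf S T X B
    · exact (key B hB).2.1
    · have hgB : g B = B := by
        rw [hg]
        simp only [if_neg hB]
      rw [hgB, hgB]

lemma merge_right
    (hcad : IsCadetWindow T v 1 k) (hk2 : 2 ≤ k)
    (hQ : ∀ p, 1 ≤ p → p ≤ k - 1 → IsSCadetWindow S T v p (k - 1) → IsSCadetWindow S T v p k)
    {B : Finset (Finset (Fin n))} (hB : IsSBoxingOf S T ((Finset.Icc 1 k).image v) B)
    (h1 : {v k} ∈ B) :
    ∃ B', B' = insert ({v k} ∪ theBlock B (v (k - 1)))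
        ((B.erase {v k}).erase (theBlock B (v (k - 1)))) ∧
      IsSBoxingOf S T ((Finset.Icc 1 k).image v) B' ∧ B'.card + 1 = B.card ∧
      {v k} ∉ B' ∧
      insert {v k} (insert (theBlock B' (v k) \ {v k}) (B'.erase (theBlock B' (v k)))) = B := by
  classical
  have hinj : WindowInj v 1 k := cadet_window_inj hcad
  have hvkX : v k ∈ (Finset.Icc 1 k).image v :=
    Finset.mem_image.2 ⟨k, Finset.mem_Icc.2 ⟨by omega, le_rfl⟩, rfl⟩
  have hv2X : v (k - 1) ∈ (Finset.Icc 1 k).image v :=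
    Finset.mem_image.2 ⟨k - 1, Finset.mem_Icc.2 ⟨by omega, by omega⟩, rfl⟩
  have hne12 : v k ≠ v (k - 1) := fun h => by
    have := hinj k (k - 1) (by omega) le_rfl (by omega) (by omega) h
    omega
  obtain ⟨Z, hZm, _⟩ := hB.2 (v (k - 1)) hv2X
  have hex2 : ∃ Y ∈ B, v (k - 1) ∈ Y := ⟨Z, hZm.1, hZm.2⟩
  obtain ⟨hY2B, hY22⟩ := theBlock_spec hex2
  set Y2 := theBlock B (v (k - 1)) with hY2def
  have hY2ne1 : Y2 ≠ {v k} := by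
    intro h
    rw [h, Finset.mem_singleton] at hY22
    exact hne12 hY22.symm
  have hv1Y2 : v k ∉ Y2 := by
    intro hmem
    obtain ⟨W, _, huniq⟩ := hB.2 (v k) hvkX
    exact hY2ne1 ((huniq _ ⟨hY2B, hmem⟩).trans
      (huniq _ ⟨h1, Finset.mem_singleton_self _⟩).symm)
  obtain ⟨p₂, q₂, hp₂1, hpq₂, hq₂k, hwin₂, hY2eq⟩ :=
    sbox_to_window hcad (hB.1 _ hY2B).1 (hB.1 _ hY2B).2
  have h2m : p₂ ≤ k - 1 ∧ k - 1 ≤ q₂ :=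
    (idx_mem_iff hinj hp₂1 hq₂k (by omega) (by omega)).1 (hY2eq ▸ hY22)
  have h1m : ¬ (p₂ ≤ k ∧ k ≤ q₂) := by
    intro hc
    exact hv1Y2 (hY2eq ▸ (idx_mem_iff hinj hp₂1 hq₂k (by omega) le_rfl).2 hc)
  have hq₂2 : q₂ = k - 1 := by omega
  have hwin1 : IsSCadetWindow S T v p₂ k := hQ p₂ hp₂1 (by omega) (hq₂2 ▸ hwin₂)
  have hUeq : {v k} ∪ Y2 = (Finset.Icc p₂ k).image v := by
    rw [hY2eq, hq₂2]
    ext x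
    simp only [Finset.mem_union, Finset.mem_singleton, Finset.mem_image, Finset.mem_Icc]
    constructor
    · rintro (rfl | ⟨j, hj, rfl⟩)
      · exact ⟨k, ⟨by omega, le_rfl⟩, rfl⟩
      · exact ⟨j, ⟨hj.1, by omega⟩, rfl⟩
    · rintro ⟨j, ⟨hj1, hj2⟩, rfl⟩
      by_cases hj : j = k
      · subst hj
        exact Or.inl rfl
      · exact Or.inr ⟨j, ⟨hj1, by omega⟩, rfl⟩
  have hUbox : IsSBox S T ({v k} ∪ Y2) := hUeq ▸ isSBox_image hwin1
  have hUX : ({v k} ∪ Y2) ⊆ (Finset.Icc 1 k).image v := by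
    rw [hUeq]
    exact Finset.image_subset_image (Finset.Icc_subset_Icc hp₂1 le_rfl)
  have hv1U : v k ∈ {v k} ∪ Y2 := Finset.mem_union_left _ (Finset.mem_singleton_self _)
  have hv2U : v (k - 1) ∈ {v k} ∪ Y2 := Finset.mem_union_right _ hY22
  have hUnotB' : ({v k} ∪ Y2) ∉ (B.erase {v k}).erase Y2 := by
    intro hmem
    have hUB : ({v k} ∪ Y2) ∈ B :=
      Finset.mem_of_mem_erase (Finset.mem_of_mem_erase hmem)
    obtain ⟨W, _, huniq⟩ := hB.2 (v k) hvkX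
    have hU1 : ({v k} ∪ Y2) = {v k} := (huniq _ ⟨hUB, hv1U⟩).trans
      (huniq _ ⟨h1, Finset.mem_singleton_self _⟩).symm
    rw [hU1, Finset.mem_singleton] at hv2U
    exact hne12 hv2U.symm
  have hY2mem' : Y2 ∈ B.erase {v k} := Finset.mem_erase.2 ⟨hY2ne1, hY2B⟩
  have hbox' : IsSBoxingOf S T ((Finset.Icc 1 k).image v)
      (insert ({v k} ∪ Y2) ((B.erase {v k}).erase Y2)) := by
    constructor
    · intro Y hY
      rcases Finset.mem_insert.1 hY with rfl | hYmem
      · exact ⟨hUbox, hUX⟩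
      · exact hB.1 Y (Finset.mem_of_mem_erase (Finset.mem_of_mem_erase hYmem))
    · intro u hu
      obtain ⟨j, hj, rfl⟩ := Finset.mem_image.1 hu
      rw [Finset.mem_Icc] at hj
      by_cases hjq : p₂ ≤ j
      · refine ⟨{v k} ∪ Y2, ⟨Finset.mem_insert_self _ _, ?_⟩, ?_⟩
        · rw [hUeq]
          exact Finset.mem_image.2 ⟨j, Finset.mem_Icc.2 ⟨hjq, hj.2⟩, rfl⟩
        · rintro W ⟨hW, hjW⟩
          rcases Finset.mem_insert.1 hW with rfl | hWmem
          · rfl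
          · exfalso
            have hWB : W ∈ B := Finset.mem_of_mem_erase (Finset.mem_of_mem_erase hWmem)
            have hWne1 : W ≠ {v k} := (Finset.mem_erase.1 (Finset.mem_of_mem_erase hWmem)).1
            have hWneY2 : W ≠ Y2 := (Finset.mem_erase.1 hWmem).1
            obtain ⟨Z₀, _, huniq⟩ := hB.2 (v j) hu
            by_cases hj1 : j = k
            · subst hj1
              exact hWne1 ((huniq _ ⟨hWB, hjW⟩).trans
                (huniq _ ⟨h1, Finset.mem_singleton_self _⟩).symm)
            · have hjY2 : v j ∈ Y2 := by
                rw [hY2eq]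
                exact Finset.mem_image.2 ⟨j, Finset.mem_Icc.2 ⟨hjq, by omega⟩, rfl⟩
              exact hWneY2 ((huniq _ ⟨hWB, hjW⟩).trans (huniq _ ⟨hY2B, hjY2⟩).symm)
      · obtain ⟨Z₀, ⟨hZ₀B, hZ₀j⟩, huniq⟩ := hB.2 (v j) hu
        have hZ₀ne1 : Z₀ ≠ {v k} := by
          rintro rfl
          rw [Finset.mem_singleton] at hZ₀j
          have := hinj j k hj.1 hj.2 (by omega) le_rfl hZ₀j
          omega
        have hZ₀neY2 : Z₀ ≠ Y2 := by
          rintro rfl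
          have := (idx_mem_iff hinj hp₂1 hq₂k hj.1 hj.2).1 (hY2eq ▸ hZ₀j)
          omega
        refine ⟨Z₀, ⟨Finset.mem_insert_of_mem
          (Finset.mem_erase.2 ⟨hZ₀neY2, Finset.mem_erase.2 ⟨hZ₀ne1, hZ₀B⟩⟩), hZ₀j⟩, ?_⟩
        rintro W ⟨hW, hjW⟩
        rcases Finset.mem_insert.1 hW with rfl | hWmem
        · exfalso
          have := (idx_mem_iff hinj hp₂1 (le_rfl : k ≤ k) hj.1 hj.2).1 (hUeq ▸ hjW)
          omega
        · exact huniq _ ⟨Finset.mem_of_mem_erase (Finset.mem_of_mem_erase hWmem), hjW⟩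
  have hcard : (insert ({v k} ∪ Y2) ((B.erase {v k}).erase Y2)).card + 1 = B.card := by
    rw [Finset.card_insert_of_notMem hUnotB', Finset.card_erase_of_mem hY2mem',
      Finset.card_erase_of_mem h1]
    have h2c : 1 < B.card := Finset.one_lt_card.2 ⟨{v k}, h1, Y2, hY2B, Ne.symm hY2ne1⟩
    omega
  have h1B' : {v k} ∉ insert ({v k} ∪ Y2) ((B.erase {v k}).erase Y2) := by
    intro hmem
    rcases Finset.mem_insert.1 hmem with h | h
    · have hx : v (k - 1) ∈ ({v k} : Finset (Fin n)) := by
        rw [h]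
        exact hv2U
      rw [Finset.mem_singleton] at hx
      exact hne12 hx.symm
    · exact (Finset.mem_erase.1 (Finset.mem_of_mem_erase h)).1 rfl
  have hTB : theBlock (insert ({v k} ∪ Y2) ((B.erase {v k}).erase Y2)) (v k) = {v k} ∪ Y2 :=
    theBlock_eq_of hbox' hvkX (Finset.mem_insert_self _ _) hv1U
  refine ⟨insert ({v k} ∪ Y2) ((B.erase {v k}).erase Y2), rfl, hbox', hcard, h1B', ?_⟩
  rw [hTB]
  have hU1 : ({v k} ∪ Y2) \ {v k} = Y2 := by
    ext x
    simp only [Finset.mem_sdiff, Finset.mem_union, Finset.mem_singleton]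
    constructor
    · rintro ⟨(rfl | h), hne⟩
      · exact absurd rfl hne
      · exact h
    · intro h
      refine ⟨Or.inr h, ?_⟩
      rintro rfl
      exact hv1Y2 h
  have hUer : (insert ({v k} ∪ Y2) ((B.erase {v k}).erase Y2)).erase ({v k} ∪ Y2)
      = (B.erase {v k}).erase Y2 := Finset.erase_insert hUnotB'
  rw [hU1, hUer, Finset.insert_erase hY2mem', Finset.insert_erase h1]

lemma split_right
    (hcad : IsCadetWindow T v 1 k) (hk2 : 2 ≤ k)
    {B : Finset (Finset (Fin n))} (hB : IsSBoxingOf S T ((Finset.Icc 1 k).image v) B)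
    (h1 : {v k} ∉ B) :
    ∃ B', B' = insert {v k} (insert (theBlock B (v k) \ {v k}) (B.erase (theBlock B (v k)))) ∧
      IsSBoxingOf S T ((Finset.Icc 1 k).image v) B' ∧ B.card + 1 = B'.card ∧
      {v k} ∈ B' ∧
      insert ({v k} ∪ theBlock B' (v (k - 1)))
        ((B'.erase {v k}).erase (theBlock B' (v (k - 1)))) = B := by
  classical
  have hinj : WindowInj v 1 k := cadet_window_inj hcad
  have hvkX : v k ∈ (Finset.Icc 1 k).image v :=
    Finset.mem_image.2 ⟨k, Finset.mem_Icc.2 ⟨by omega, le_rfl⟩, rfl⟩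
  have hv2X : v (k - 1) ∈ (Finset.Icc 1 k).image v :=
    Finset.mem_image.2 ⟨k - 1, Finset.mem_Icc.2 ⟨by omega, by omega⟩, rfl⟩
  have hne12 : v k ≠ v (k - 1) := fun h => by
    have := hinj k (k - 1) (by omega) le_rfl (by omega) (by omega) h
    omega
  obtain ⟨Z, hZm, _⟩ := hB.2 (v k) hvkX
  have hex1 : ∃ Y ∈ B, v k ∈ Y := ⟨Z, hZm.1, hZm.2⟩
  obtain ⟨hY1B, hY11⟩ := theBlock_spec hex1
  set Y1 := theBlock B (v k) with hY1def
  have hY1ne : Y1 ≠ {v k} := by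
    intro h
    rw [h] at hY1B
    exact h1 hY1B
  obtain ⟨p₁, q₁, hp₁1, hpq₁, hq₁k, hwin₁, hY1eq⟩ :=
    sbox_to_window hcad (hB.1 _ hY1B).1 (hB.1 _ hY1B).2
  have h1m : p₁ ≤ k ∧ k ≤ q₁ :=
    (idx_mem_iff hinj hp₁1 hq₁k (by omega) le_rfl).1 (hY1eq ▸ hY11)
  have hq₁k' : q₁ = k := by omega
  have hp₁2 : p₁ ≤ k - 1 := by
    by_contra hq
    have hpk : p₁ = k := by omega
    apply hY1ne
    rw [hY1eq, hpk, hq₁k', singleton_image]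
  have hv2Y1 : v (k - 1) ∈ Y1 := by
    rw [hY1eq]
    exact Finset.mem_image.2 ⟨k - 1, Finset.mem_Icc.2 ⟨hp₁2, by omega⟩, rfl⟩
  have hD : Y1 \ {v k} = (Finset.Icc p₁ (k - 1)).image v := by
    rw [hY1eq, hq₁k']
    ext x
    simp only [Finset.mem_sdiff, Finset.mem_image, Finset.mem_Icc, Finset.mem_singleton]
    constructor
    · rintro ⟨⟨j, ⟨hj1, hj2⟩, rfl⟩, hne⟩
      refine ⟨j, ⟨hj1, ?_⟩, rfl⟩
      rcases Nat.lt_or_ge j k with h | h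
      · omega
      · exfalso
        have : j = k := by omega
        exact hne (by rw [this])
    · rintro ⟨j, ⟨hj1, hj2⟩, rfl⟩
      refine ⟨⟨j, ⟨hj1, by omega⟩, rfl⟩, ?_⟩
      intro h
      have := hinj j k (by omega) (by omega) (by omega) le_rfl h
      omega
  have hwinD : IsSCadetWindow S T v p₁ (k - 1) := subwindow hwin₁ le_rfl hp₁2 (by omega)
  have hbox1 : IsSBox S T ({v k} : Finset (Fin n)) := by
    rw [← singleton_image (v := v) (c := k)]
    exact isSBox_image (subwindow hwin₁ (by omega) le_rfl (by omega))
  have hboxD : IsSBox S T (Y1 \ {v k}) := hD ▸ isSBox_image hwinD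
  have hDX : (Y1 \ {v k}) ⊆ (Finset.Icc 1 k).image v :=
    (Finset.sdiff_subset).trans (hB.1 _ hY1B).2
  have h1X : ({v k} : Finset (Fin n)) ⊆ (Finset.Icc 1 k).image v :=
    Finset.singleton_subset_iff.2 hvkX
  have hv2D : v (k - 1) ∈ Y1 \ {v k} := by
    rw [Finset.mem_sdiff, Finset.mem_singleton]
    exact ⟨hv2Y1, fun h => hne12 h.symm⟩
  have hv1D : v k ∉ Y1 \ {v k} := by
    rw [Finset.mem_sdiff]
    rintro ⟨_, h⟩
    exact h (Finset.mem_singleton_self _)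
  have hn1 : ({v k} : Finset (Fin n)) ∉ insert (Y1 \ {v k}) (B.erase Y1) := by
    intro hmem
    rcases Finset.mem_insert.1 hmem with h | h
    · have : v k ∈ Y1 \ {v k} := by
        rw [← h]
        exact Finset.mem_singleton_self _
      exact hv1D this
    · exact h1 (Finset.mem_of_mem_erase h)
  have hn2 : (Y1 \ {v k}) ∉ B.erase Y1 := by
    intro hmem
    have hDB : (Y1 \ {v k}) ∈ B := Finset.mem_of_mem_erase hmem
    obtain ⟨W, _, huniq⟩ := hB.2 (v (k - 1)) hv2X
    have : (Y1 \ {v k}) = Y1 := (huniq _ ⟨hDB, hv2D⟩).trans (huniq _ ⟨hY1B, hv2Y1⟩).symm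
    rw [← this] at hY11
    exact hv1D hY11
  have hbox' : IsSBoxingOf S T ((Finset.Icc 1 k).image v)
      (insert {v k} (insert (Y1 \ {v k}) (B.erase Y1))) := by
    constructor
    · intro Y hY
      rcases Finset.mem_insert.1 hY with rfl | hYmem
      · exact ⟨hbox1, h1X⟩
      · rcases Finset.mem_insert.1 hYmem with rfl | hYmem2
        · exact ⟨hboxD, hDX⟩
        · exact hB.1 Y (Finset.mem_of_mem_erase hYmem2)
    · intro u hu
      obtain ⟨j, hj, rfl⟩ := Finset.mem_image.1 hu
      rw [Finset.mem_Icc] at hj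
      by_cases hj1 : j = k
      · rw [hj1]
        refine ⟨{v k}, ⟨Finset.mem_insert_self _ _, Finset.mem_singleton_self _⟩, ?_⟩
        rintro W ⟨hW, hjW⟩
        rcases Finset.mem_insert.1 hW with rfl | hWmem
        · rfl
        · exfalso
          rcases Finset.mem_insert.1 hWmem with rfl | hWmem2
          · exact hv1D hjW
          · have hWB : W ∈ B := Finset.mem_of_mem_erase hWmem2
            obtain ⟨Z₀, _, huniq⟩ := hB.2 (v k) hvkX
            have : W = Y1 := (huniq _ ⟨hWB, hjW⟩).trans (huniq _ ⟨hY1B, hY11⟩).symm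
            exact (Finset.mem_erase.1 hWmem2).1 this
      · by_cases hjq : p₁ ≤ j
        · have hjD : v j ∈ Y1 \ {v k} := by
            rw [hD]
            exact Finset.mem_image.2 ⟨j, Finset.mem_Icc.2 ⟨hjq, by omega⟩, rfl⟩
          have hjY1 : v j ∈ Y1 := (Finset.mem_sdiff.1 hjD).1
          refine ⟨Y1 \ {v k}, ⟨Finset.mem_insert_of_mem (Finset.mem_insert_self _ _), hjD⟩, ?_⟩
          rintro W ⟨hW, hjW⟩
          rcases Finset.mem_insert.1 hW with rfl | hWmem
          · exfalso
            rw [Finset.mem_singleton] at hjW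
            have := hinj j k hj.1 hj.2 (by omega) le_rfl hjW
            omega
          · rcases Finset.mem_insert.1 hWmem with rfl | hWmem2
            · rfl
            · exfalso
              have hWB : W ∈ B := Finset.mem_of_mem_erase hWmem2
              obtain ⟨Z₀, _, huniq⟩ := hB.2 (v j) hu
              have : W = Y1 := (huniq _ ⟨hWB, hjW⟩).trans (huniq _ ⟨hY1B, hjY1⟩).symm
              exact (Finset.mem_erase.1 hWmem2).1 this
        · obtain ⟨Z₀, ⟨hZ₀B, hZ₀j⟩, huniq⟩ := hB.2 (v j) hu
          have hZ₀neY1 : Z₀ ≠ Y1 := by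
            rintro rfl
            have := (idx_mem_iff hinj hp₁1 hq₁k hj.1 hj.2).1 (hY1eq ▸ hZ₀j)
            omega
          refine ⟨Z₀, ⟨Finset.mem_insert_of_mem (Finset.mem_insert_of_mem
            (Finset.mem_erase.2 ⟨hZ₀neY1, hZ₀B⟩)), hZ₀j⟩, ?_⟩
          rintro W ⟨hW, hjW⟩
          rcases Finset.mem_insert.1 hW with rfl | hWmem
          · exfalso
            rw [Finset.mem_singleton] at hjW
            have := hinj j k hj.1 hj.2 (by omega) le_rfl hjW
            omega
          · rcases Finset.mem_insert.1 hWmem with rfl | hWmem2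
            · exfalso
              have := (idx_mem_iff hinj hp₁1 (by omega : k - 1 ≤ k) hj.1 hj.2).1 (hD ▸ hjW)
              omega
            · exact huniq _ ⟨Finset.mem_of_mem_erase hWmem2, hjW⟩
  have hcard : B.card + 1 = (insert {v k} (insert (Y1 \ {v k}) (B.erase Y1))).card := by
    rw [Finset.card_insert_of_notMem hn1, Finset.card_insert_of_notMem hn2,
      Finset.card_erase_of_mem hY1B]
    have : 1 ≤ B.card := Finset.card_pos.2 ⟨Y1, hY1B⟩
    omega
  have hTB : theBlock (insert {v k} (insert (Y1 \ {v k}) (B.erase Y1))) (v (k - 1))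
      = Y1 \ {v k} :=
    theBlock_eq_of hbox' hv2X (Finset.mem_insert_of_mem (Finset.mem_insert_self _ _)) hv2D
  refine ⟨insert {v k} (insert (Y1 \ {v k}) (B.erase Y1)), rfl, hbox', hcard,
    Finset.mem_insert_self _ _, ?_⟩
  rw [hTB]
  have hu : {v k} ∪ (Y1 \ {v k}) = Y1 := by
    ext x
    simp only [Finset.mem_union, Finset.mem_singleton, Finset.mem_sdiff]
    constructor
    · rintro (rfl | ⟨h, _⟩)
      · exact hY11
      · exact h
    · intro h
      by_cases hx : x = v k
      · exact Or.inl hx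
      · exact Or.inr ⟨h, by simpa using hx⟩
  have he1 : (insert {v k} (insert (Y1 \ {v k}) (B.erase Y1))).erase {v k}
      = insert (Y1 \ {v k}) (B.erase Y1) := Finset.erase_insert hn1
  rw [hu, he1, Finset.erase_insert hn2, Finset.insert_erase hY1B]

lemma contrib_zero_right
    (hcad : IsCadetWindow T v 1 k) (hk2 : 2 ≤ k)
    (hQ : ∀ p, 1 ≤ p → p ≤ k - 1 → IsSCadetWindow S T v p (k - 1) → IsSCadetWindow S T v p k) :
    contrib S T ((Finset.Icc 1 k).image v) = 0 := by
  classical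
  have hinj : WindowInj v 1 k := cadet_window_inj hcad
  set X := (Finset.Icc 1 k).image v with hX
  have hXcard : X.card = k := by
    rw [hX, Finset.card_image_of_injOn
      (fun i hi j hj e => hinj i j (Finset.mem_Icc.1 hi).1 (Finset.mem_Icc.1 hi).2
        (Finset.mem_Icc.1 hj).1 (Finset.mem_Icc.1 hj).2 e), Nat.card_Icc]
    omega
  set g : Finset (Finset (Fin n)) → Finset (Finset (Fin n)) := fun B =>
    if IsSBoxingOf S T X B then
      (if {v k} ∈ B then
        insert ({v k} ∪ theBlock B (v (k - 1))) ((B.erase {v k}).erase (theBlock B (v (k - 1))))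
       else insert {v k} (insert (theBlock B (v k) \ {v k}) (B.erase (theBlock B (v k)))))
    else B with hg
  have key : ∀ B, IsSBoxingOf S T X B → IsSBoxingOf S T X (g B) ∧ g (g B) = B ∧
      ((g B).card + 1 = B.card ∨ B.card + 1 = (g B).card) := by
    intro B hB
    by_cases h1 : {v k} ∈ B
    · obtain ⟨B', hB'eq, hbox, hcard, hnot1, hrev⟩ := merge_right hcad hk2 hQ hB h1
      have hgB : g B = B' := by
        rw [hg]
        simp only [if_pos hB, if_pos h1]
        exact hB'eq.symm
      have hgg : g B' = B := by
        rw [hg]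
        simp only [if_pos hbox, if_neg hnot1]
        exact (if_pos hbox).trans hrev
      rw [hgB]
      exact ⟨hbox, hgg, Or.inl hcard⟩
    · obtain ⟨B', hB'eq, hbox, hcard, hin1, hrev⟩ := split_right hcad hk2 hB h1
      have hgB : g B = B' := by
        rw [hg]
        simp only [if_pos hB, if_neg h1]
        exact hB'eq.symm
      have hgg : g B' = B := by
        rw [hg]
        simp only [if_pos hbox, if_pos hin1]
        exact (if_pos hbox).trans hrev
      rw [hgB]
      exact ⟨hbox, hgg, Or.inr hcard⟩
  rw [contrib]
  refine Finset.sum_ninvolution g ?_ ?_ (fun B => Finset.mem_univ _) ?_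
  · intro B
    by_cases hB : IsSBoxingOf S T X B
    · obtain ⟨hbox, _, hcard⟩ := key B hB
      simp only [if_pos hB, if_pos hbox]
      have hBle : B.card ≤ k := hXcard ▸ boxing_card_le hB
      have hgBle : (g B).card ≤ k := hXcard ▸ boxing_card_le hbox
      rw [hXcard]
      rcases hcard with h | h
      · rw [show k - (g B).card = (k - B.card) + 1 by omega, pow_succ]
        ring
      · rw [show k - B.card = (k - (g B).card) + 1 by omega, pow_succ]
        ring
    · have hgB : g B = B := by
        rw [hg]
        simp only [if_neg hB]
      rw [hgB]
      simp only [if_neg hB]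
      ring
  · intro B hfB
    by_cases hB : IsSBoxingOf S T X B
    · obtain ⟨_, _, hcard⟩ := key B hB
      intro heq
      rw [heq] at hcard
      omega
    · exfalso
      apply hfB
      simp only [if_neg hB]
  · intro B
    by_cases hB : IsSBoxingOf S T X B
    · exact (key B hB).2.1
    · have hgB : g B = B := by
        rw [hg]
        simp only [if_neg hB]
      rw [hgB, hgB]

end Invol

/-- Corollary 3.17: for an `S`-connected cadet sequence `(v 1, …, v k)`
with maximal `S`-cadet sequences `X_1, …, X_{k'}` (the windows `[a r, b r]`, in increasing
order of last index), if the contribution is nonzero and `k' > 1` then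
`|X_1 \ X_2| = 1 = |X_{k'} \ X_{k'-1}|`. -/
theorem statement_5 {n : ℕ} (S : Fin n → Fin n → Finset ℤ) (T : PlaneTree n (mOf S))
    (k : ℕ) (v : ℕ → Fin n)
    (hcad : IsCadetWindow T v 1 k) (hinj : WindowInj v 1 k)
    (hconn : SConnected S T ((Finset.Icc 1 k).image v))
    (k' : ℕ) (a b : ℕ → ℕ)
    (hboxes : ∀ r, 1 ≤ r → r ≤ k' → 1 ≤ a r ∧ a r ≤ b r ∧ b r ≤ k ∧
      IsMaxSCadetSet S T ((Finset.Icc (a r) (b r)).image v))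
    (hmono : ∀ r s, 1 ≤ r → r < s → s ≤ k' → b r < b s)
    (hall : ∀ Z, IsMaxSCadetSet S T Z → Z ⊆ (Finset.Icc 1 k).image v →
      ∃ r, 1 ≤ r ∧ r ≤ k' ∧ Z = (Finset.Icc (a r) (b r)).image v)
    (hk' : 1 < k')
    (hne : contrib S T ((Finset.Icc 1 k).image v) ≠ 0) :
    ((Finset.Icc (a 1) (b 1)).image v \ (Finset.Icc (a 2) (b 2)).image v).card = 1 ∧
    ((Finset.Icc (a k') (b k')).image v \
      (Finset.Icc (a (k' - 1)) (b (k' - 1))).image v).card = 1 := by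
  classical
  obtain ⟨ha11, hab1, hbk1, _⟩ := hboxes 1 le_rfl (by omega)
  obtain ⟨ha12, hab2, hbk2, _⟩ := hboxes 2 (by omega) hk'
  obtain ⟨ha1k, habk, hbkk, _⟩ := hboxes k' (by omega) le_rfl
  obtain ⟨ha1k1, habk1, hbkk1, _⟩ := hboxes (k' - 1) (by omega) (by omega)
  have hb12 : b 1 < b 2 := hmono 1 2 le_rfl (by omega) hk'
  have hbk1k : b (k' - 1) < b k' := hmono (k' - 1) k' (by omega) (by omega) le_rfl
  have hk2 : 2 ≤ k := by omega
  have hv1X : v 1 ∈ (Finset.Icc 1 k).image v :=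
    Finset.mem_image.2 ⟨1, Finset.mem_Icc.2 ⟨le_rfl, by omega⟩, rfl⟩
  have hvkX : v k ∈ (Finset.Icc 1 k).image v :=
    Finset.mem_image.2 ⟨k, Finset.mem_Icc.2 ⟨by omega, le_rfl⟩, rfl⟩
  -- a boxing exists
  obtain ⟨B₀, hB₀⟩ : ∃ B, IsSBoxingOf S T ((Finset.Icc 1 k).image v) B := by
    by_contra hno
    push_neg at hno
    apply hne
    rw [contrib]
    apply Finset.sum_eq_zero
    intro B _
    rw [if_neg (hno B)]
  -- a 1 = 1
  have ha1 : a 1 = 1 := by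
    obtain ⟨Z, ⟨hZB, hZ1⟩, _⟩ := hB₀.2 (v 1) hv1X
    obtain ⟨p, q, hp1, hpq, hqk, hwin, hZeq⟩ :=
      sbox_to_window hcad (hB₀.1 _ hZB).1 (hB₀.1 _ hZB).2
    have hpmem := (idx_mem_iff hinj hp1 hqk le_rfl (by omega)).1 (hZeq ▸ hZ1)
    obtain ⟨r₁, hr₁1, hr₁2, har₁, hbr₁⟩ := window_in_max hcad hconn hboxes hall hwin hqk
    by_cases hr : r₁ = 1
    · rw [hr] at har₁
      omega
    · have := a_strictmono hcad hboxes hmono le_rfl (by omega) hr₁2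
      omega
  -- b k' = k
  have hbk' : b k' = k := by
    obtain ⟨Z, ⟨hZB, hZk⟩, _⟩ := hB₀.2 (v k) hvkX
    obtain ⟨p, q, hp1, hpq, hqk, hwin, hZeq⟩ :=
      sbox_to_window hcad (hB₀.1 _ hZB).1 (hB₀.1 _ hZB).2
    have hpmem := (idx_mem_iff hinj hp1 hqk (by omega) le_rfl).1 (hZeq ▸ hZk)
    obtain ⟨r₂, hr₂1, hr₂2, har₂, hbr₂⟩ := window_in_max hcad hconn hboxes hall hwin hqk
    obtain ⟨_, _, hbr₂k, _⟩ := hboxes r₂ hr₂1 hr₂2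
    by_cases hr : r₂ = k'
    · rw [hr] at hbr₂
      omega
    · have := hmono r₂ k' hr₂1 (by omega) le_rfl
      omega
  -- a 2 = 2
  have ha2 : a 2 = 2 := by
    by_contra hne2
    have ha12' : a 1 < a 2 := a_strictmono hcad hboxes hmono le_rfl (by omega) hk'
    have ha23 : 3 ≤ a 2 := by omega
    apply hne
    apply contrib_zero_left hcad hk2
    intro q hq2 hqk hw
    obtain ⟨r, hr1, hr2, har, hbr⟩ := window_in_max hcad hconn hboxes hall hw hqk
    have hr1' : r = 1 := by
      by_contra hrne
      have h2r' : 2 ≤ r := by omega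
      have haux : a 2 ≤ a r := by
        rcases eq_or_lt_of_le h2r' with h | h
        · rw [h]
        · exact le_of_lt (a_strictmono hcad hboxes hmono (by omega) h hr2)
      omega
    rw [hr1'] at hbr
    have hwin1 : IsSCadetWindow S T v (a 1) (b 1) := win_r hcad hboxes le_rfl (by omega)
    rw [ha1] at hwin1
    exact subwindow hwin1 le_rfl (by omega) hbr
  -- b (k'-1) = k - 1
  have hbk1' : b (k' - 1) = k - 1 := by
    by_contra hne2
    have hble : b (k' - 1) ≤ k - 2 := by omega
    apply hne
    apply contrib_zero_right hcad hk2
    intro p hp1 hpk1 hw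
    obtain ⟨r, hr1, hr2, har, hbr⟩ := window_in_max hcad hconn hboxes hall hw (by omega)
    have hrk : r = k' := by
      by_contra hrne
      have hrle : r ≤ k' - 1 := by omega
      have haux : b r ≤ b (k' - 1) := by
        rcases eq_or_lt_of_le hrle with h | h
        · rw [h]
        · exact le_of_lt (hmono r (k' - 1) hr1 h (by omega))
      omega
    rw [hrk] at har
    have hwink : IsSCadetWindow S T v (a k') (b k') := win_r hcad hboxes (by omega) le_rfl
    rw [hbk'] at hwink
    exact subwindow hwink har (by omega) le_rfl
  have hak1k : a (k' - 1) < a k' := a_strictmono hcad hboxes hmono (by omega) (by omega) le_rfl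
  constructor
  · have hset1 : (Finset.Icc (a 1) (b 1)).image v \ (Finset.Icc (a 2) (b 2)).image v
        = {v 1} := by
      ext x
      simp only [Finset.mem_sdiff, Finset.mem_singleton]
      constructor
      · rintro ⟨hx1, hx2⟩
        obtain ⟨j, hj, rfl⟩ := Finset.mem_image.1 hx1
        rw [Finset.mem_Icc] at hj
        by_cases hj1 : j = 1
        · rw [hj1]
        · exfalso
          apply hx2
          exact Finset.mem_image.2 ⟨j, Finset.mem_Icc.2 ⟨by omega, by omega⟩, rfl⟩
      · rintro rfl
        refine ⟨Finset.mem_image.2 ⟨1, Finset.mem_Icc.2 ⟨by omega, by omega⟩, rfl⟩, ?_⟩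
        intro hmem
        have := (idx_mem_iff hinj (by omega) hbk2 le_rfl (by omega)).1 hmem
        omega
    rw [hset1, Finset.card_singleton]
  · have hset2 : (Finset.Icc (a k') (b k')).image v \
        (Finset.Icc (a (k' - 1)) (b (k' - 1))).image v = {v k} := by
      ext x
      simp only [Finset.mem_sdiff, Finset.mem_singleton]
      constructor
      · rintro ⟨hx1, hx2⟩
        obtain ⟨j, hj, rfl⟩ := Finset.mem_image.1 hx1
        rw [Finset.mem_Icc] at hj
        by_cases hjk : j = k
        · rw [hjk]
        · exfalso
          apply hx2
          refine Finset.mem_image.2 ⟨j, Finset.mem_Icc.2 ⟨by omega, by omega⟩, rfl⟩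
      · rintro rfl
        refine ⟨Finset.mem_image.2 ⟨k, Finset.mem_Icc.2 ⟨by omega, by omega⟩, rfl⟩, ?_⟩
        intro hmem
        have := (idx_mem_iff hinj (by omega) (by omega : b (k' - 1) ≤ k) (by omega)
          le_rfl).1 hmem
        omega
    rw [hset2, Finset.card_singleton]
end

section
/- Let A_S be almost transitive and let T ∈ T^(m)(n). Suppose that (v_1, v_2, …, v_k) and (v_k, v_{k+1}, …, v_{k+ℓ}) are S-cadet sequences of T. If either v_k = 1 or neither sequence contains the node 1, then (v_1, v_2, …, v_{k+ℓ}) is an S-cadet sequence of T. -/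
open scoped Classical

lemma cadet_window_inj_s7 {n m : ℕ} (T : PlaneTree n m) (v : ℕ → Fin n) (a b : ℕ)
    (h : IsCadetWindow T v a b) :
    ∀ i j, a ≤ i → i < j → j ≤ b → v i ≠ v j := by
  intro i j hai hij hjb heq
  have key : ∀ s : ℕ, ∃ p, i < p ∧ p ≤ j ∧ T.parent^[s] (v j) = v p := by
    intro s
    induction s with
    | zero => exact ⟨j, hij, le_refl j, rfl⟩
    | succ s ih =>
      obtain ⟨p, hip, hpj, hs⟩ := ih
      have hpar : T.parent (v p) = v (p - 1) :=
        (h.2.2 p (by omega) (by omega)).1.2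
      by_cases hp : p = i + 1
      · refine ⟨j, hij, le_refl j, ?_⟩
        rw [Function.iterate_succ_apply', hs, hpar, hp]
        simpa using heq
      · exact ⟨p - 1, by omega, by omega, by
          rw [Function.iterate_succ_apply', hs, hpar]⟩
  obtain ⟨N, hN⟩ := T.reaches_root (v j)
  obtain ⟨p, hip, hpj, hs⟩ := key N
  have hroot : v p ≠ T.root := (h.2.2 p (by omega) (by omega)).1.1
  exact hroot (by rw [← hs, hN])

/-- Lemma 4.4: if `A_S` is almost transitive and `(v 1, …, v k)` and
`(v k, …, v (k+l))` are `S`-cadet sequences of `T` such that either `v k` is the node `1`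
or neither sequence contains the node `1`, then `(v 1, …, v (k+l))` is an
`S`-cadet sequence of `T`. -/
theorem statement_7 {n : ℕ} [NeZero n] (S : Fin n → Fin n → Finset ℤ)
    (hAT : AlmostTransitive S) (T : PlaneTree n (mOf S)) (v : ℕ → Fin n) (k l : ℕ)
    (h1 : IsSCadetWindow S T v 1 k) (h2 : IsSCadetWindow S T v k (k + l))
    (h3 : v k = 0 ∨ ∀ p, 1 ≤ p → p ≤ k + l → v p ≠ 0) :
    IsSCadetWindow S T v 1 (k + l) := by
  obtain ⟨⟨_, h1k, hc1⟩, hS1⟩ := h1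
  obtain ⟨⟨_, hkl, hc2⟩, hS2⟩ := h2
  have hcw : IsCadetWindow T v 1 (k + l) := by
    refine ⟨le_refl 1, by omega, ?_⟩
    intro p hp1 hp
    by_cases hpk : p ≤ k
    · exact hc1 p hp1 hpk
    · exact hc2 p (by omega) hp
  have hinj := cadet_window_inj_s7 T v 1 (k + l) hcw
  refine ⟨hcw, ?_⟩
  intro i j hi hij hj
  by_cases hjk : j ≤ k
  · exact hS1 i j hi hij hjk
  by_cases hik : k ≤ i
  · exact hS2 i j hik hij hj
  push_neg at hjk hik
  have hsum : (∑ p ∈ Finset.Icc (i + 1) j, T.lsib (v p))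
      = (∑ p ∈ Finset.Icc (i + 1) k, T.lsib (v p))
        + (∑ p ∈ Finset.Icc (k + 1) j, T.lsib (v p)) := by
    rw [Finset.Icc_add_one_left_eq_Ioc, Finset.Icc_add_one_left_eq_Ioc, Finset.Icc_add_one_left_eq_Ioc,
      Finset.sum_Ioc_consecutive _ (le_of_lt hik) (le_of_lt hjk)]
  rw [hsum]
  have hs := hS1 i k hi hik (le_refl k)
  have ht := hS2 k j (le_refl k) hjk hj
  have hij0 : v i ≠ v j := hinj i j hi hij (by omega)
  have hik0 : v i ≠ v k := hinj i k hi hik (by omega)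
  have hkj0 : v k ≠ v j := hinj k j (by omega) hjk (by omega)
  have hvi0 : (v i : ℕ) ≠ 0 ∧ (v j : ℕ) ≠ 0 := by
    rcases h3 with h0 | hall
    · constructor
      · intro h; exact hik0 (by rw [h0]; exact Fin.ext (by simpa using h))
      · intro h; exact hkj0 (by rw [h0]; exact (Fin.ext (by simpa using h)).symm)
    · exact ⟨fun h => hall i (by omega) (by omega) (Fin.ext (by simpa using h)),
        fun h => hall j (by omega) (by omega) (Fin.ext (by simpa using h))⟩
  exact hAT (v i) (v k) (v j) hik0 hkj0 hij0 hvi0.1 hvi0.2 _ _ hs ht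
end

section
/- Let A_S be almost transitive and let T ∈ T^(m)(n). Suppose there exist positive integers a, b, c and nodes u_1, …, u_{a+b+c} of T such that both (u_1, u_2, …, u_{a+b}) and (u_a, u_{a+1}, …, u_{a+b+c}) are maximal S-cadet sequences of T. Then either a ≥ 2 and u_{a−1} = 1, or u_{a+b+1} = 1. -/
open scoped Classical

section AuxStatement8


section Helpers
variable {n m : ℕ}

lemma isCadet_unique (T : PlaneTree n m) {u v w : Fin n}
    (hv : T.IsCadet u v) (hw : T.IsCadet u w) : v = w := by
  have h1 := hv.2 w hw.1
  have h2 := hw.2 v hv.1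
  exact T.pos_inj v w hv.1.1 hw.1.1 (hv.1.2.trans hw.1.2.symm) (le_antisymm h2 h1)

noncomputable def pdepth (T : PlaneTree n m) (v : Fin n) : ℕ := Nat.find (T.reaches_root v)

lemma pdepth_child (T : PlaneTree n m) {u v : Fin n} (h : T.IsChild v u) :
    pdepth T v = pdepth T u + 1 := by
  have hs : T.parent^[pdepth T u + 1] v = T.root := by
    rw [Function.iterate_succ_apply, h.2]
    exact Nat.find_spec (T.reaches_root u)
  have h1 : pdepth T v ≤ pdepth T u + 1 := Nat.find_le hs
  have hk : T.parent^[pdepth T v] v = T.root := Nat.find_spec (T.reaches_root v)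
  have hpos : pdepth T v ≠ 0 := by
    intro h0
    rw [h0, Function.iterate_zero_apply] at hk
    exact h.1 hk
  obtain ⟨k', hk'⟩ := Nat.exists_eq_succ_of_ne_zero hpos
  rw [hk', Function.iterate_succ_apply, h.2] at hk
  have h2 : pdepth T u ≤ k' := Nat.find_le hk
  omega

lemma window_depth {T : PlaneTree n m} {v : ℕ → Fin n} {A B : ℕ}
    (h : IsCadetWindow T v A B) :
    ∀ q, A + q ≤ B → pdepth T (v (A + q)) = pdepth T (v A) + q := by
  intro q
  induction q with
  | zero => intro _; simp
  | succ q ih =>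
    intro hq
    have hc := h.2.2 (A + q + 1) (by omega) (by omega)
    rw [show A + q + 1 - 1 = A + q by omega] at hc
    have := pdepth_child T hc.1
    rw [show A + (q + 1) = A + q + 1 by omega, this, ih (by omega)]
    omega

lemma first_eq {T : PlaneTree n m} {u w : ℕ → Fin n} {A B A' B' : ℕ}
    (hu : IsCadetWindow T u A B) (hw : IsCadetWindow T w A' B')
    (him : (Finset.Icc A B).image u = (Finset.Icc A' B').image w) : u A = w A' := by
  have h1 : u A ∈ (Finset.Icc A' B').image w := by
    rw [← him]; exact Finset.mem_image_of_mem u (Finset.mem_Icc.mpr ⟨le_refl _, hu.2.1⟩)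
  have h2 : w A' ∈ (Finset.Icc A B).image u := by
    rw [him]; exact Finset.mem_image_of_mem w (Finset.mem_Icc.mpr ⟨le_refl _, hw.2.1⟩)
  obtain ⟨q, hq, hq2⟩ := Finset.mem_image.mp h1
  obtain ⟨r, hr, hr2⟩ := Finset.mem_image.mp h2
  rw [Finset.mem_Icc] at hq hr
  have e1 : pdepth T (w q) = pdepth T (w A') + (q - A') := by
    have h := window_depth hw (q - A') (by omega)
    rwa [show A' + (q - A') = q by omega] at h
  have e2 : pdepth T (u r) = pdepth T (u A) + (r - A) := by
    have h := window_depth hu (r - A) (by omega)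
    rwa [show A + (r - A) = r by omega] at h
  rw [hq2] at e1
  rw [hr2] at e2
  have hq0 : q = A' := by omega
  rw [← hq2, hq0]

lemma window_eq {T : PlaneTree n m} {u w : ℕ → Fin n} {A B A' B' : ℕ}
    (hu : IsCadetWindow T u A B) (hw : IsCadetWindow T w A' B')
    (hbase : u A = w A') : ∀ q, A + q ≤ B → A' + q ≤ B' → u (A + q) = w (A' + q) := by
  intro q
  induction q with
  | zero => intro _ _; simpa using hbase
  | succ q ih =>
    intro hq1 hq2
    have hcu := hu.2.2 (A + q + 1) (by omega) (by omega)
    have hcw := hw.2.2 (A' + q + 1) (by omega) (by omega)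
    rw [show A + q + 1 - 1 = A + q by omega] at hcu
    rw [show A' + q + 1 - 1 = A' + q by omega] at hcw
    rw [ih (by omega) (by omega)] at hcu
    have := isCadet_unique T hcu hcw
    rw [show A + (q + 1) = A + q + 1 by omega, show A' + (q + 1) = A' + q + 1 by omega]
    exact this

lemma sum_window_eq {M : Type*} [AddCommMonoid M] (f g : ℕ → M) (A A' L : ℕ)
    (heq : ∀ q, q ≤ L → f (A + q) = g (A' + q)) (q1 q2 : ℕ) (h2 : q2 ≤ L) :
    ∑ p ∈ Finset.Icc (A + q1) (A + q2), f p = ∑ p ∈ Finset.Icc (A' + q1) (A' + q2), g p := by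
  rw [← Finset.map_add_left_Icc, ← Finset.map_add_left_Icc, Finset.sum_map, Finset.sum_map]
  refine Finset.sum_congr rfl fun q hq => ?_
  rw [Finset.mem_Icc] at hq
  simp only [addLeftEmbedding_apply]
  exact heq q (le_trans hq.2 h2)

lemma sum_Icc_split (F : ℕ → ℕ) {i j l : ℕ} (h0 : 1 ≤ i) (h1 : i - 1 ≤ j) (h2 : j ≤ l) :
    (∑ p ∈ Finset.Icc i j, F p) + (∑ p ∈ Finset.Icc (j + 1) l, F p)
      = ∑ p ∈ Finset.Icc i l, F p := by
  have e1 : Finset.Icc i j = Finset.Ioc (i - 1) j := by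
    rw [← Finset.Icc_add_one_left_eq_Ioc]; congr 1; omega
  have e2 : Finset.Icc (j + 1) l = Finset.Ioc j l := Finset.Icc_add_one_left_eq_Ioc j l
  have e3 : Finset.Icc i l = Finset.Ioc (i - 1) l := by
    rw [← Finset.Icc_add_one_left_eq_Ioc]; congr 1; omega
  rw [e1, e2, e3]
  exact Finset.sum_Ioc_consecutive _ (by omega) h2

lemma transfer_S {S : Fin n → Fin n → Finset ℤ} {T : PlaneTree n m}
    {u v : ℕ → Fin n} {A A' L : ℕ}
    (heq : ∀ q, q ≤ L → u (A + q) = v (A' + q))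
    (hS : ∀ i j : ℕ, A' ≤ i → i < j → j ≤ A' + L →
      (∑ p ∈ Finset.Icc (i + 1) j, T.lsib (v p)) ∉ Sminus S (v i) (v j)) :
    ∀ i j : ℕ, A ≤ i → i < j → j ≤ A + L →
      (∑ p ∈ Finset.Icc (i + 1) j, T.lsib (u p)) ∉ Sminus S (u i) (u j) := by
  intro i j hi hij hj
  have e1 : u i = v (A' + (i - A)) := by
    have h := heq (i - A) (by omega); rwa [show A + (i - A) = i by omega] at h
  have e2 : u j = v (A' + (j - A)) := by
    have h := heq (j - A) (by omega); rwa [show A + (j - A) = j by omega] at h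
  have e3 : (∑ p ∈ Finset.Icc (i + 1) j, T.lsib (u p))
      = ∑ p ∈ Finset.Icc (A' + (i - A) + 1) (A' + (j - A)), T.lsib (v p) := by
    have h := sum_window_eq (fun p => T.lsib (u p)) (fun p => T.lsib (v p)) A A' L
      (fun q hq => congrArg T.lsib (heq q hq)) (i - A + 1) (j - A) (by omega)
    rwa [show A + (i - A + 1) = i + 1 by omega, show A + (j - A) = j by omega,
        show A' + (i - A + 1) = A' + (i - A) + 1 by omega] at h
  rw [e1, e2, e3]
  exact hS _ _ (by omega) (by omega) (by omega)

end Helpers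

end AuxStatement8

/-- Corollary 4.5: if `A_S` is almost transitive and both
`(u 1, …, u (a+b))` and `(u a, …, u (a+b+c))` are maximal `S`-cadet sequences of `T`
(for positive `a, b, c`), then `u (a-1)` or `u (a+b+1)` is the node `1`. -/
theorem statement_8 {n : ℕ} [NeZero n] (S : Fin n → Fin n → Finset ℤ)
    (hAT : AlmostTransitive S) (T : PlaneTree n (mOf S))
    (a b c : ℕ) (ha : 1 ≤ a) (hb : 1 ≤ b) (hc : 1 ≤ c) (u : ℕ → Fin n)
    (hcad : IsCadetWindow T u 1 (a + b + c))
    (hinj : WindowInj u 1 (a + b + c))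
    (h1 : IsMaxSCadetSet S T ((Finset.Icc 1 (a + b)).image u))
    (h2 : IsMaxSCadetSet S T ((Finset.Icc a (a + b + c)).image u)) :
    (2 ≤ a ∧ u (a - 1) = 0) ∨ u (a + b + 1) = 0 := by
  by_contra hcon
  push_neg at hcon
  obtain ⟨hcon1, hcon2⟩ := hcon
  obtain ⟨k₁, v₁, a₁, b₁, hmax₁, hinj₁, hmw₁, hY₁⟩ := h1
  obtain ⟨k₂, v₂, a₂, b₂, hmax₂, hinj₂, hmw₂, hY₂⟩ := h2
  obtain ⟨hbk₁, hS₁, hleft₁, hright₁⟩ := hmw₁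
  obtain ⟨hbk₂, hS₂, hleft₂, hright₂⟩ := hmw₂
  have hC₁ : IsCadetWindow T v₁ a₁ b₁ := hS₁.1
  have hC₂ : IsCadetWindow T v₂ a₂ b₂ := hS₂.1
  have ha₁1 : 1 ≤ a₁ := hC₁.1
  have hab₁ : a₁ ≤ b₁ := hC₁.2.1
  have ha₂1 : 1 ≤ a₂ := hC₂.1
  have hab₂ : a₂ ≤ b₂ := hC₂.2.1
  have hamb₁ : IsCadetWindow T v₁ 1 k₁ := hmax₁.1
  have hamb₂ : IsCadetWindow T v₂ 1 k₂ := hmax₂.1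
  have huw1 : IsCadetWindow T u 1 (a + b) :=
    ⟨le_refl 1, by omega, fun p hp hp2 => hcad.2.2 p hp (by omega)⟩
  have huw2 : IsCadetWindow T u a (a + b + c) :=
    ⟨ha, by omega, fun p hp hp2 => hcad.2.2 p (by omega) hp2⟩
  have hvw1 : IsCadetWindow T v₁ a₁ k₁ :=
    ⟨ha₁1, by omega, fun p hp hp2 => hamb₁.2.2 p (by omega) hp2⟩
  have hvw2 : IsCadetWindow T v₂ a₂ k₂ :=
    ⟨ha₂1, by omega, fun p hp hp2 => hamb₂.2.2 p (by omega) hp2⟩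
  have hbase₁ : u 1 = v₁ a₁ := first_eq huw1 hC₁ hY₁
  have hbase₂ : u a = v₂ a₂ := first_eq huw2 hC₂ hY₂
  have heq₁ : ∀ q, 1 + q ≤ a + b + c → a₁ + q ≤ k₁ → u (1 + q) = v₁ (a₁ + q) :=
    window_eq hcad hvw1 hbase₁
  have heq₂ : ∀ q, a + q ≤ a + b + c → a₂ + q ≤ k₂ → u (a + q) = v₂ (a₂ + q) :=
    window_eq huw2 hvw2 hbase₂
  have hiu1 : Set.InjOn u ((Finset.Icc 1 (a + b) : Finset ℕ) : Set ℕ) := by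
    intro p hp q hq hpq
    simp only [Finset.coe_Icc, Set.mem_Icc] at hp hq
    exact hinj p q hp.1 (by omega) hq.1 (by omega) hpq
  have hiu2 : Set.InjOn u ((Finset.Icc a (a + b + c) : Finset ℕ) : Set ℕ) := by
    intro p hp q hq hpq
    simp only [Finset.coe_Icc, Set.mem_Icc] at hp hq
    exact hinj p q (by omega) hp.2 (by omega) hq.2 hpq
  have hiv1 : Set.InjOn v₁ ((Finset.Icc a₁ b₁ : Finset ℕ) : Set ℕ) := by
    intro p hp q hq hpq
    simp only [Finset.coe_Icc, Set.mem_Icc] at hp hq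
    exact hinj₁ p q (by omega) (by omega) (by omega) (by omega) hpq
  have hiv2 : Set.InjOn v₂ ((Finset.Icc a₂ b₂ : Finset ℕ) : Set ℕ) := by
    intro p hp q hq hpq
    simp only [Finset.coe_Icc, Set.mem_Icc] at hp hq
    exact hinj₂ p q (by omega) (by omega) (by omega) (by omega) hpq
  have hcard₁ : a + b = b₁ + 1 - a₁ := by
    have h := congrArg Finset.card hY₁
    rw [Finset.card_image_of_injOn hiu1, Finset.card_image_of_injOn hiv1,
      Nat.card_Icc, Nat.card_Icc] at h
    omega
  have hcard₂ : b + c + 1 = b₂ + 1 - a₂ := by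
    have h := congrArg Finset.card hY₂
    rw [Finset.card_image_of_injOn hiu2, Finset.card_image_of_injOn hiv2,
      Nat.card_Icc, Nat.card_Icc] at h
    omega
  have fact1 : ∀ i j : ℕ, 1 ≤ i → i < j → j ≤ a + b →
      (∑ p ∈ Finset.Icc (i + 1) j, T.lsib (u p)) ∉ Sminus S (u i) (u j) := by
    have h := transfer_S (A := 1) (A' := a₁) (L := a + b - 1)
      (fun q hq => heq₁ q (by omega) (by omega))
      (fun i j h1' h2' h3' => hS₁.2 i j h1' h2' (by omega))
    intro i j h1' h2' h3'
    exact h i j h1' h2' (by omega)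
  have fact2 : ∀ i j : ℕ, a ≤ i → i < j → j ≤ a + b + c →
      (∑ p ∈ Finset.Icc (i + 1) j, T.lsib (u p)) ∉ Sminus S (u i) (u j) := by
    have h := transfer_S (A := a) (A' := a₂) (L := b + c)
      (fun q hq => heq₂ q (by omega) (by omega))
      (fun i j h1' h2' h3' => hS₂.2 i j h1' h2' (by omega))
    intro i j h1' h2' h3'
    exact h i j h1' h2' (by omega)
  have hcadTop : T.IsCadet (u (a + b)) (u (a + b + 1)) := by
    have h := hcad.2.2 (a + b + 1) (by omega) (by omega)
    rwa [show a + b + 1 - 1 = a + b by omega] at h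
  have hvb₁ : u (a + b) = v₁ b₁ := by
    have h := heq₁ (a + b - 1) (by omega) (by omega)
    rwa [show 1 + (a + b - 1) = a + b by omega, show a₁ + (a + b - 1) = b₁ by omega] at h
  have hbk₁' : b₁ ≠ k₁ := by
    intro hE
    apply hmax₁.2.1 (u (a + b + 1))
    rw [← hE, ← hvb₁]
    exact hcadTop.1
  have hnot₁ : ¬ IsSCadetWindow S T v₁ a₁ (b₁ + 1) := by
    rcases hright₁ with h | h
    · exact absurd h hbk₁'
    · exact h
  have hcw₁' : IsCadetWindow T v₁ a₁ (b₁ + 1) :=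
    ⟨ha₁1, by omega, fun p hp hp2 => hamb₁.2.2 p (by omega) (by omega)⟩
  have hfail₁ : ∃ i j : ℕ, a₁ ≤ i ∧ i < j ∧ j ≤ b₁ + 1 ∧
      (∑ p ∈ Finset.Icc (i + 1) j, T.lsib (v₁ p)) ∈ Sminus S (v₁ i) (v₁ j) := by
    by_contra hno
    push_neg at hno
    exact hnot₁ ⟨hcw₁', fun i j hi hij hj => hno i j hi hij hj⟩
  obtain ⟨i₁, j₁, hi₁, hij₁, hj₁, hmem₁⟩ := hfail₁
  have hj₁' : j₁ = b₁ + 1 := by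
    by_contra hne
    exact hS₁.2 i₁ j₁ hi₁ hij₁ (by omega) hmem₁
  subst hj₁'
  set x := i₁ - a₁ + 1 with hxdef
  have hx1 : 1 ≤ x := by omega
  have hx2 : x ≤ a + b := by omega
  have hex1 : v₁ i₁ = u x := by
    have h := heq₁ (i₁ - a₁) (by omega) (by omega)
    rw [show 1 + (i₁ - a₁) = x by omega, show a₁ + (i₁ - a₁) = i₁ by omega] at h
    exact h.symm
  have hex2 : v₁ (b₁ + 1) = u (a + b + 1) := by
    have h := heq₁ (a + b) (by omega) (by omega)
    rw [show 1 + (a + b) = a + b + 1 by omega, show a₁ + (a + b) = b₁ + 1 by omega] at h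
    exact h.symm
  have hex3 : (∑ p ∈ Finset.Icc (i₁ + 1) (b₁ + 1), T.lsib (v₁ p))
      = ∑ p ∈ Finset.Icc (x + 1) (a + b + 1), T.lsib (u p) := by
    have h := sum_window_eq (fun p => T.lsib (u p)) (fun p => T.lsib (v₁ p)) 1 a₁ (a + b)
      (fun q hq => congrArg T.lsib (heq₁ q (by omega) (by omega)))
      (i₁ - a₁ + 1) (a + b) (le_refl _)
    rw [show 1 + (i₁ - a₁ + 1) = x + 1 by omega, show 1 + (a + b) = a + b + 1 by omega,
       show a₁ + (i₁ - a₁ + 1) = i₁ + 1 by omega, show a₁ + (a + b) = b₁ + 1 by omega] at h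
    exact h.symm
  rw [hex1, hex2, hex3] at hmem₁
  have hxa : x < a := by
    by_contra hge
    push_neg at hge
    exact fact2 x (a + b + 1) hge (by omega) (by omega) hmem₁
  have ha2 : 2 ≤ a := by omega
  have hu1 : u (a - 1) ≠ 0 := hcon1 ha2
  have hcadA : T.IsCadet (u (a - 1)) (u a) := hcad.2.2 a (by omega) (by omega)
  have ha₂2 : a₂ ≠ 1 := by
    intro hE
    apply hmax₂.2.2 (u (a - 1))
    rw [hE] at hbase₂
    rw [← hbase₂]
    exact hcadA
  have hnot₂ : ¬ IsSCadetWindow S T v₂ (a₂ - 1) b₂ := by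
    rcases hleft₂ with h | h
    · exact absurd h ha₂2
    · exact h
  have hcw₂' : IsCadetWindow T v₂ (a₂ - 1) b₂ :=
    ⟨by omega, by omega, fun p hp hp2 => hamb₂.2.2 p (by omega) (by omega)⟩
  have hfail₂ : ∃ i j : ℕ, a₂ - 1 ≤ i ∧ i < j ∧ j ≤ b₂ ∧
      (∑ p ∈ Finset.Icc (i + 1) j, T.lsib (v₂ p)) ∈ Sminus S (v₂ i) (v₂ j) := by
    by_contra hno
    push_neg at hno
    exact hnot₂ ⟨hcw₂', fun i j hi hij hj => hno i j hi hij hj⟩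
  obtain ⟨i₂, j₂, hi₂, hij₂, hj₂, hmem₂⟩ := hfail₂
  have hi₂' : i₂ = a₂ - 1 := by
    by_contra hne
    exact hS₂.2 i₂ j₂ (by omega) hij₂ hj₂ hmem₂
  subst hi₂'
  set y := a + (j₂ - a₂) with hydef
  have hy1 : a ≤ y := by omega
  have hy2 : y ≤ a + b + c := by omega
  have hey1 : v₂ (a₂ - 1) = u (a - 1) := by
    have hpc : T.IsCadet (v₂ (a₂ - 1)) (v₂ a₂) := hamb₂.2.2 a₂ (by omega) (by omega)
    have e1 : T.parent (v₂ a₂) = v₂ (a₂ - 1) := hpc.1.2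
    have e2 : T.parent (u a) = u (a - 1) := hcadA.1.2
    rw [← e1, ← hbase₂, e2]
  have hey2 : v₂ j₂ = u y := by
    have h := heq₂ (j₂ - a₂) (by omega) (by omega)
    rw [show a + (j₂ - a₂) = y by omega, show a₂ + (j₂ - a₂) = j₂ by omega] at h
    exact h.symm
  have hey3 : (∑ p ∈ Finset.Icc (a₂ - 1 + 1) j₂, T.lsib (v₂ p))
      = ∑ p ∈ Finset.Icc a y, T.lsib (u p) := by
    have h := sum_window_eq (fun p => T.lsib (u p)) (fun p => T.lsib (v₂ p)) a a₂ (b + c)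
      (fun q hq => congrArg T.lsib (heq₂ q (by omega) (by omega))) 0 (j₂ - a₂) (by omega)
    rw [show a + 0 = a by omega, show a + (j₂ - a₂) = y by omega,
       show a₂ + 0 = a₂ by omega, show a₂ + (j₂ - a₂) = j₂ by omega] at h
    rw [show a₂ - 1 + 1 = a₂ by omega]
    exact h.symm
  rw [hey1, hey2, hey3] at hmem₂
  have hya : a + b < y := by
    by_contra hge
    push_neg at hge
    have h := fact1 (a - 1) y (by omega) (by omega) hge
    rw [show a - 1 + 1 = a by omega] at h
    exact h hmem₂
  have hne : ∀ p q : ℕ, 1 ≤ p → p ≤ a + b + c → 1 ≤ q → q ≤ a + b + c → p ≠ q →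
      u p ≠ u q :=
    fun p q h1' h2' h3' h4' h5' hE => h5' (hinj p q h1' h2' h3' h4' hE)
  have hval : ∀ w : Fin n, w ≠ 0 → (w : ℕ) ≠ 0 :=
    fun w hw hE => hw (Fin.ext (by simp [hE]))
  have h01 : (∑ p ∈ Finset.Icc a (a + b), T.lsib (u p)) ∉ Sminus S (u (a - 1)) (u (a + b)) := by
    have h := fact1 (a - 1) (a + b) (by omega) (by omega) (le_refl _)
    rwa [show a - 1 + 1 = a by omega] at h
  have h02 : (∑ p ∈ Finset.Icc (a + b + 1) (a + b + 1), T.lsib (u p))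
      ∉ Sminus S (u (a + b)) (u (a + b + 1)) :=
    fact2 (a + b) (a + b + 1) (by omega) (by omega) (by omega)
  have key : (∑ p ∈ Finset.Icc a (a + b + 1), T.lsib (u p))
      ∉ Sminus S (u (a - 1)) (u (a + b + 1)) := by
    have h := hAT (u (a - 1)) (u (a + b)) (u (a + b + 1))
      (hne _ _ (by omega) (by omega) (by omega) (by omega) (by omega))
      (hne _ _ (by omega) (by omega) (by omega) (by omega) (by omega))
      (hne _ _ (by omega) (by omega) (by omega) (by omega) (by omega))
      (hval _ hu1) (hval _ hcon2) _ _ h01 h02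
    rwa [sum_Icc_split (fun p => T.lsib (u p)) (i := a) (j := a + b) (l := a + b + 1)
      (by omega) (by omega) (by omega)] at h
  by_cases hxa1 : x = a - 1
  · rw [hxa1, show a - 1 + 1 = a by omega] at hmem₁
    exact key hmem₁
  · have hxlt : x < a - 1 := by omega
    by_cases hy3 : y = a + b + 1
    · rw [hy3] at hmem₂
      exact key hmem₂
    · have hylt : a + b + 1 < y := by omega
      by_cases hux : u x = 0
      · have huy : u y ≠ 0 := by
          intro hE
          have := hinj x y (by omega) (by omega) (by omega) (by omega) (hux.trans hE.symm)
          omega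
        have h03 : (∑ p ∈ Finset.Icc (a + b + 1 + 1) y, T.lsib (u p))
            ∉ Sminus S (u (a + b + 1)) (u y) :=
          fact2 (a + b + 1) y (by omega) (by omega) (by omega)
        have h := hAT (u (a - 1)) (u (a + b + 1)) (u y)
          (hne _ _ (by omega) (by omega) (by omega) (by omega) (by omega))
          (hne _ _ (by omega) (by omega) (by omega) (by omega) (by omega))
          (hne _ _ (by omega) (by omega) (by omega) (by omega) (by omega))
          (hval _ hu1) (hval _ huy) _ _ key h03
        rw [sum_Icc_split (fun p => T.lsib (u p)) (i := a) (j := a + b + 1) (l := y)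
          (by omega) (by omega) (by omega)] at h
        exact h hmem₂
      · have h04 := fact1 x (a - 1) (by omega) (by omega) (by omega)
        have key' : (∑ p ∈ Finset.Icc (a - 1 + 1) (a + b + 1), T.lsib (u p))
            ∉ Sminus S (u (a - 1)) (u (a + b + 1)) := by
          rw [show a - 1 + 1 = a by omega]
          exact key
        have h := hAT (u x) (u (a - 1)) (u (a + b + 1))
          (hne _ _ (by omega) (by omega) (by omega) (by omega) (by omega))
          (hne _ _ (by omega) (by omega) (by omega) (by omega) (by omega))
          (hne _ _ (by omega) (by omega) (by omega) (by omega) (by omega))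
          (hval _ hux) (hval _ hcon2) _ _ h04 key'
        rw [sum_Icc_split (fun p => T.lsib (u p)) (i := x + 1) (j := a - 1) (l := a + b + 1)
          (by omega) (by omega) (by omega)] at h
        exact h hmem₁
end
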